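/- arXiv:2511.22588 — 5 statements merged into one kernel-verified Lean document; each statement's English description precedes it below -/
import Mathlib

section
/- Let T be any interval exchange transformation over the ordered alphabet A with permutation π (no regularity or minimality assumption). Then for every u ∈ L(T), every return word w to u in L(T) is π-clustering for A. -/
/-- `wordPow u p` is the `p`-fold concatenation `u^p`. -/
def wordPow {A : Type*} (u : List A) : ℕ → List A
  | 0 => []
  | n + 1 => u ++ wordPow u n

/-- A word is primitive if it is not a proper integer power of another word. -/
def Primitive {A : Type*} (w : List A) : Prop :=
  ∀ (v : List A) (m : ℕ), w = wordPow v m → m = 1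

/-- The Burrows–Wheeler transform of a word: the last letters of its cyclic rotations
listed in non-decreasing lexicographic order. -/
def bwt {A : Type*} [LinearOrder A] (w : List A) : List A :=
  (Multiset.sort
    (((List.range w.length).map (fun i => w.rotate i) : List (List A)) : Multiset (List A)) (· ≤ ·)).filterMap
    List.getLast?

/-- `w` is `π`-clustering: its BWT is `π(a₁)^{k₁} ⋯ π(a_k)^{k_k}` where `a₁ < … < a_k`
enumerates the alphabet and `k_i` is the number of occurrences of `π(a_i)` in `w`. -/
def Clustering {A : Type*} [LinearOrder A] [Fintype A] (π : Equiv.Perm A) (w : List A) : Prop :=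
  bwt w =
    ((Finset.univ.sort (· ≤ ·)).map (fun a => List.replicate (w.count (π a)) (π a))).flatten

/-- An interval exchange transformation on `[l, l + Σ len a)` over the ordered alphabet `A`,
with subinterval lengths `len` and permutation `perm`. -/
structure IET (A : Type*) [Fintype A] [LinearOrder A] where
  l : ℝ
  len : A → ℝ
  len_pos : ∀ a, 0 < len a
  perm : Equiv.Perm A

namespace IET

variable {A : Type*} [Fintype A] [LinearOrder A] (T : IET A)

/-- Right endpoint of the domain interval. -/
def right : ℝ := T.l + ∑ a, T.len a

/-- The domain `[ℓ, r)` of the IET. -/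
def domain : Set ℝ := Set.Ico T.l T.right

/-- Left endpoint of the subinterval indexed by `a`. -/
def leftEnd (a : A) : ℝ := T.l + ∑ b ∈ Finset.univ.filter (· < a), T.len b

/-- The subinterval `I_a`. -/
def seg (a : A) : Set ℝ := Set.Ico (T.leftEnd a) (T.leftEnd a + T.len a)

/-- Translation amount on `I_a`. -/
def τ (a : A) : ℝ :=
  (∑ b ∈ Finset.univ.filter (fun b => T.perm.symm b < T.perm.symm a), T.len b)
    - (∑ b ∈ Finset.univ.filter (· < a), T.len b)

open scoped Classical in
/-- The interval exchange transformation as a map `ℝ → ℝ` (identity off the domain). -/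
noncomputable def map (x : ℝ) : ℝ :=
  if h : ∃ a, x ∈ T.seg a then x + T.τ h.choose else x

/-- The inverse transformation. -/
noncomputable def inv : ℝ → ℝ := Function.invFun T.map

open scoped Classical in
/-- The letter of the subinterval containing `x`. -/
noncomputable def idx [Nonempty A] (x : ℝ) : A :=
  if h : ∃ a, x ∈ T.seg a then h.choose else Classical.arbitrary A

/-- The trajectory (natural coding) `Ω_T(x)` of `x`. -/
noncomputable def traj [Nonempty A] (x : ℝ) (n : ℕ) : A := T.idx (T.map^[n] x)

/-- The language of the IET: all finite factors of all trajectories. -/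
def lang [Nonempty A] : Set (List A) :=
  { v | ∃ x ∈ T.domain, ∃ i : ℕ, v = (List.range v.length).map (fun j => T.traj x (i + j)) }

/-- The cylinder `I_w` of a word `w`. -/
def cyl (w : List A) : Set ℝ :=
  { x | ∀ i : Fin w.length, T.map^[(i : ℕ)] x ∈ T.seg (w.get i) }

/-- Formal discontinuities of `T`. -/
def D : Set ℝ := { y | (∃ a, y = T.leftEnd a) ∧ y ≠ T.l }

/-- Formal discontinuities of the inverse of `T`. -/
def Dinv : Set ℝ :=
  { y | (∃ a, y = T.l + ∑ b ∈ Finset.univ.filter (fun b => T.perm.symm b < T.perm.symm a), T.len b)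
      ∧ y ≠ T.l }

/-- `T^i` for an integer `i`. -/
noncomputable def iterZ (i : ℤ) (z : ℝ) : ℝ :=
  if 0 ≤ i then T.map^[i.toNat] z else T.inv^[(-i).toNat] z

/-- Forward return time `ρ⁺_{J,T}(z)` of `z` to the open interval `(u, v)`. -/
noncomputable def rhoPlus (u v z : ℝ) : ℕ := sInf {n : ℕ | 0 < n ∧ T.map^[n] z ∈ Set.Ioo u v}

/-- Backward return time `ρ⁻_{J,T}(z)` of `z` to the open interval `(u, v)`. -/
noncomputable def rhoMinus (u v z : ℝ) : ℕ := sInf {n : ℕ | T.inv^[n] z ∈ Set.Ioo u v}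

/-- The set `N_{J,T}(z)` for `J = [u, v)`. -/
noncomputable def Nset (u v z : ℝ) : Set ℝ :=
  { y | ∃ i : ℤ, -(T.rhoMinus u v z : ℤ) ≤ i ∧ i ≤ (T.rhoPlus u v z : ℤ) - 1 ∧ y = T.iterZ i z }

/-- The set `Div(J, T)` for `J = [u, v)`. -/
noncomputable def Div (u v : ℝ) : Set ℝ := ⋃ γ ∈ T.D, T.Nset u v γ

/-- The interval `[u, v)` is admissible for `T`. -/
noncomputable def Admissible (u v : ℝ) : Prop :=
  u ∈ T.Div u v ∪ {T.right} ∧ v ∈ T.Div u v ∪ {T.right}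

/-- Keane's regularity condition: the forward orbits of the formal discontinuities are
infinite and pairwise disjoint. -/
def Regular : Prop :=
  ∀ γ ∈ T.D, ∀ γ' ∈ T.D, ∀ m n : ℕ, T.map^[m] γ = T.map^[n] γ' → γ = γ' ∧ m = n

end IET

open scoped Classical in
/-- First return time of `x` to `J` under `f` (junk value `0` if it never returns). -/
noncomputable def returnTime (f : ℝ → ℝ) (J : Set ℝ) (x : ℝ) : ℕ :=
  if h : ∃ n, 0 < n ∧ f^[n] x ∈ J then Nat.find h else 0

/-- First return map of `f` to `J`. -/
noncomputable def firstReturn (f : ℝ → ℝ) (J : Set ℝ) (x : ℝ) : ℝ :=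
  f^[returnTime f J x] x

/-- A finite word is a prefix of an infinite word (a sequence). -/
def SeqPrefix {α : Type*} (l : List α) (f : ℕ → α) : Prop :=
  ∀ i : Fin l.length, l.get i = f i

/-- `w` is a (left) return word to `u` in the language `L`: `wu ∈ L`, `u` is a prefix and a
suffix of `wu`, and `u` occurs exactly twice as a factor of `wu`. -/
def IsReturnWord {A : Type*} [DecidableEq A] (L : Set (List A)) (u w : List A) : Prop :=
  (w ++ u) ∈ L ∧ u <+: (w ++ u) ∧ u <:+ (w ++ u) ∧
    ((List.range ((w ++ u).length + 1)).countP
      (fun i => decide (u <+: (w ++ u).drop i))) = 2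


namespace IETAux

variable {A : Type*} [Fintype A] [LinearOrder A]

/-- key-filtered sum growth -/
lemma key_sum_le {κ : Type*} [LinearOrder κ] (len : A → ℝ) (hpos : ∀ a, 0 < len a)
    (key : A → κ) {a b : A} (h : key a < key b) :
    (∑ c ∈ Finset.univ.filter (fun c => key c < key a), len c) + len a ≤
      ∑ c ∈ Finset.univ.filter (fun c => key c < key b), len c := by
  classical
  have hnotmem : a ∉ Finset.univ.filter (fun c => key c < key a) := by
    simp
  have hsub : insert a (Finset.univ.filter (fun c => key c < key a)) ⊆
      Finset.univ.filter (fun c => key c < key b) := by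
    intro c hc
    rcases Finset.mem_insert.1 hc with rfl | hc
    · simp [h]
    · simp only [Finset.mem_filter, Finset.mem_univ, true_and] at hc ⊢
      exact hc.trans h
  calc (∑ c ∈ Finset.univ.filter (fun c => key c < key a), len c) + len a
      = ∑ c ∈ insert a (Finset.univ.filter (fun c => key c < key a)), len c := by
        rw [Finset.sum_insert hnotmem]; ring
    _ ≤ _ := Finset.sum_le_sum_of_subset_of_nonneg hsub (fun i _ _ => (hpos i).le)

lemma key_sum_le_univ (len : A → ℝ) (hpos : ∀ a, 0 < len a)
    {κ : Type*} [LinearOrder κ] (key : A → κ) (a : A) :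
    (∑ c ∈ Finset.univ.filter (fun c => key c < key a), len c) + len a ≤ ∑ c, len c := by
  classical
  have hnotmem : a ∉ Finset.univ.filter (fun c => key c < key a) := by simp
  calc (∑ c ∈ Finset.univ.filter (fun c => key c < key a), len c) + len a
      = ∑ c ∈ insert a (Finset.univ.filter (fun c => key c < key a)), len c := by
        rw [Finset.sum_insert hnotmem]; ring
    _ ≤ _ := Finset.sum_le_sum_of_subset_of_nonneg (Finset.subset_univ _)
        (fun i _ _ => (hpos i).le)

end IETAux

namespace IET

variable {A : Type*} [Fintype A] [LinearOrder A] (T : IET A)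

/-- Left endpoint of the image of `I_a` under the exchange. -/
def imgLeft (a : A) : ℝ :=
  T.l + ∑ b ∈ Finset.univ.filter (fun b => T.perm.symm b < T.perm.symm a), T.len b

lemma leftEnd_le (a : A) : T.l ≤ T.leftEnd a := by
  have : (0:ℝ) ≤ ∑ b ∈ Finset.univ.filter (· < a), T.len b :=
    Finset.sum_nonneg fun i _ => (T.len_pos i).le
  unfold leftEnd; linarith

lemma seg_order {a b : A} (h : a < b) : T.leftEnd a + T.len a ≤ T.leftEnd b := by
  have := IETAux.key_sum_le T.len T.len_pos id h
  unfold leftEnd; simp only [id] at this; linarith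

lemma seg_subset_domain (a : A) : T.seg a ⊆ T.domain := by
  intro x hx
  obtain ⟨h1, h2⟩ := hx
  constructor
  · exact le_trans (T.leftEnd_le a) h1
  · have := IETAux.key_sum_le_univ T.len T.len_pos id a
    unfold leftEnd at h2
    unfold right
    simp only [id] at this
    linarith

lemma seg_lt {a b : A} (h : a < b) {x y : ℝ} (hx : x ∈ T.seg a) (hy : y ∈ T.seg b) :
    x < y :=
  lt_of_lt_of_le hx.2 (le_trans (T.seg_order h) hy.1)

lemma seg_unique {a b : A} {x : ℝ} (hx : x ∈ T.seg a) (hy : x ∈ T.seg b) : a = b := by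
  rcases lt_trichotomy a b with h | h | h
  · exact absurd (T.seg_lt h hx hy) (lt_irrefl x)
  · exact h
  · exact absurd (T.seg_lt h hy hx) (lt_irrefl x)

lemma exists_seg [Nonempty A] {x : ℝ} (hx : x ∈ T.domain) : ∃ a, x ∈ T.seg a := by
  classical
  have hS : (Finset.univ.filter (fun a => T.leftEnd a ≤ x)).Nonempty := by
    obtain ⟨a₀, ha₀⟩ := Finset.exists_min_image (Finset.univ : Finset A) id Finset.univ_nonempty
    refine ⟨a₀, ?_⟩
    simp only [Finset.mem_filter, Finset.mem_univ, true_and]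
    have : Finset.univ.filter (· < a₀) = ∅ := by
      apply Finset.filter_eq_empty_iff.2
      intro b _
      exact not_lt.2 (ha₀.2 b (Finset.mem_univ b))
    unfold leftEnd
    rw [this]
    simpa using hx.1
  set a := (Finset.univ.filter (fun a => T.leftEnd a ≤ x)).max' hS with ha
  refine ⟨a, ?_, ?_⟩
  · have := (Finset.univ.filter (fun a => T.leftEnd a ≤ x)).max'_mem hS
    simpa using this
  · by_contra hcon
    push_neg at hcon
    -- x ≥ leftEnd a + len a
    by_cases htop : ∃ b, a < b
    · obtain ⟨b, hb, hbmin⟩ := Finset.exists_min_image (Finset.univ.filter (fun b => a < b))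
        id (by obtain ⟨b, hb⟩ := htop; exact ⟨b, by simpa using hb⟩)
      simp only [Finset.mem_filter, Finset.mem_univ, true_and] at hb
      have hfil : Finset.univ.filter (· < b) = insert a (Finset.univ.filter (· < a)) := by
        ext c
        simp only [Finset.mem_filter, Finset.mem_univ, true_and, Finset.mem_insert]
        constructor
        · intro hc
          rcases lt_trichotomy c a with h | h | h
          · exact Or.inr h
          · exact Or.inl h
          · exact absurd (hbmin c (by simpa using h)) (by simpa using hc)
        · rintro (rfl | hc)
          · exact hb
          · exact hc.trans hb
      have hle : T.leftEnd b ≤ x := by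
        unfold leftEnd
        rw [hfil, Finset.sum_insert (by simp)]
        unfold leftEnd at hcon
        linarith
      have : b ≤ a := Finset.le_max' _ b (by simp [hle])
      exact absurd hb (not_lt.2 this)
    · push_neg at htop
      have hfil : (Finset.univ : Finset A) = insert a (Finset.univ.filter (· < a)) := by
        ext c
        simp only [Finset.mem_univ, Finset.mem_insert, Finset.mem_filter, true_and, true_iff]
        rcases eq_or_lt_of_le (htop c) with h | h
        · exact Or.inl h
        · exact Or.inr h
      have : T.right ≤ x := by
        unfold right
        rw [hfil, Finset.sum_insert (by simp)]
        unfold leftEnd at hcon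
        linarith
      exact absurd hx.2 (not_lt.2 this)

lemma idx_eq {x : ℝ} {a : A} [Nonempty A] (hx : x ∈ T.seg a) : T.idx x = a := by
  classical
  have h : ∃ b, x ∈ T.seg b := ⟨a, hx⟩
  unfold idx
  rw [dif_pos h]
  exact T.seg_unique h.choose_spec hx

lemma mem_seg_idx {x : ℝ} [Nonempty A] (hx : x ∈ T.domain) : x ∈ T.seg (T.idx x) := by
  classical
  obtain ⟨a, ha⟩ := T.exists_seg hx
  rw [T.idx_eq ha]; exact ha

lemma map_eq {x : ℝ} {a : A} (hx : x ∈ T.seg a) : T.map x = x + T.τ a := by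
  classical
  have h : ∃ b, x ∈ T.seg b := ⟨a, hx⟩
  unfold map
  rw [dif_pos h]
  rw [T.seg_unique h.choose_spec hx]

lemma leftEnd_add_τ (a : A) : T.leftEnd a + T.τ a = T.imgLeft a := by
  unfold leftEnd τ imgLeft; ring

lemma map_mem_img {x : ℝ} {a : A} (hx : x ∈ T.seg a) :
    T.map x ∈ Set.Ico (T.imgLeft a) (T.imgLeft a + T.len a) := by
  rw [T.map_eq hx]
  obtain ⟨h1, h2⟩ := hx
  constructor
  · rw [← T.leftEnd_add_τ a]; linarith
  · rw [← T.leftEnd_add_τ a]; linarith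

lemma img_order {a b : A} (h : T.perm.symm a < T.perm.symm b) :
    T.imgLeft a + T.len a ≤ T.imgLeft b := by
  have := IETAux.key_sum_le T.len T.len_pos (fun c => T.perm.symm c) h
  unfold imgLeft; linarith

lemma img_subset_domain (a : A) :
    Set.Ico (T.imgLeft a) (T.imgLeft a + T.len a) ⊆ T.domain := by
  intro x hx
  obtain ⟨h1, h2⟩ := hx
  have h0 : (0:ℝ) ≤ ∑ b ∈ Finset.univ.filter (fun b => T.perm.symm b < T.perm.symm a), T.len b :=
    Finset.sum_nonneg fun i _ => (T.len_pos i).le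
  have := IETAux.key_sum_le_univ T.len T.len_pos (fun c => T.perm.symm c) a
  unfold imgLeft at h1 h2
  constructor
  · linarith
  · unfold right; linarith

lemma map_mem_domain [Nonempty A] {x : ℝ} (hx : x ∈ T.domain) : T.map x ∈ T.domain := by
  obtain ⟨a, ha⟩ := T.exists_seg hx
  exact T.img_subset_domain a (T.map_mem_img ha)

lemma iterate_mem_domain [Nonempty A] {x : ℝ} (hx : x ∈ T.domain) (k : ℕ) : T.map^[k] x ∈ T.domain := by
  induction k with
  | zero => simpa using hx
  | succ k ih => rw [Function.iterate_succ_apply']; exact T.map_mem_domain ih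

lemma img_lt {a b : A} (h : T.perm.symm a < T.perm.symm b) {x y : ℝ}
    (hx : x ∈ Set.Ico (T.imgLeft a) (T.imgLeft a + T.len a))
    (hy : y ∈ Set.Ico (T.imgLeft b) (T.imgLeft b + T.len b)) : x < y :=
  lt_of_lt_of_le hx.2 (le_trans (T.img_order h) hy.1)

end IET

namespace IETAux

lemma lex_getElem {A : Type*} [LinearOrder A] :
    ∀ {l₁ l₂ : List A}, List.Lex (· < ·) l₁ l₂ → l₁.length = l₂.length →
    ∃ m, ∃ (h₁ : m < l₁.length) (h₂ : m < l₂.length),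
      (∀ t (ht₁ : t < l₁.length) (ht₂ : t < l₂.length), t < m → l₁[t] = l₂[t]) ∧ l₁[m] < l₂[m]
  | _, _, List.Lex.nil, hlen => by simp at hlen
  | _, _, @List.Lex.rel _ _ a _ b _ hab, hlen =>
      ⟨0, by simp, by simp, fun t _ _ ht => absurd ht (Nat.not_lt_zero t), hab⟩
  | _, _, @List.Lex.cons _ _ a l₁ l₂ h, hlen => by
      obtain ⟨m, h₁, h₂, hag, hlt⟩ := lex_getElem h (by simpa using hlen)
      refine ⟨m + 1, by simpa using h₁, by simpa using h₂, ?_, by simpa using hlt⟩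
      intro t ht₁ ht₂ htm
      cases t with
      | zero => rfl
      | succ t =>
        have := hag t (by simpa using ht₁) (by simpa using ht₂) (by omega)
        simpa using this

lemma lt_lex {A : Type*} [LinearOrder A] {l₁ l₂ : List A} (h : l₁ < l₂) :
    List.Lex (· < ·) l₁ l₂ := h

lemma filterMap_eq_map' {α β : Type*} (g : α → Option β) (f : α → β) :
    ∀ (l : List α), (∀ a ∈ l, g a = some (f a)) → l.filterMap g = l.map f
  | [], _ => rfl
  | a :: l, h => by
      rw [List.filterMap_cons, h a List.mem_cons_self, List.map_cons,
        filterMap_eq_map' g f l (fun b hb => h b (List.mem_cons_of_mem a hb))]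

lemma sum_map_single {A : Type*} [DecidableEq A] (f : A → ℕ) (a0 : A) :
    ∀ (L : List A), L.Nodup → a0 ∈ L →
      (L.map (fun a => if a = a0 then f a else 0)).sum = f a0
  | [], _, hmem => by simp at hmem
  | a :: L, hnd, hmem => by
      rcases List.mem_cons.1 hmem with rfl | hmem'
      · have hzero : (L.map (fun b => if b = a0 then f b else 0)).sum = 0 := by
          apply List.sum_eq_zero
          intro x hx
          obtain ⟨b, hb, rfl⟩ := List.mem_map.1 hx
          have : b ≠ a0 := fun hba => ((List.nodup_cons.1 hnd).1 (hba ▸ hb))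
          simp [this]
        simp [hzero]
      · have hne : a ≠ a0 := fun h => ((List.nodup_cons.1 hnd).1 (h ▸ hmem'))
        have := sum_map_single f a0 L (List.nodup_cons.1 hnd).2 hmem'
        simp [hne, this]

lemma rotate_perm_shift {α : Type*} (w : List α) (hw : w ≠ []) :
    ((List.range w.length).map (fun t => w.rotate (t + 1))).Perm
      ((List.range w.length).map (fun t => w.rotate t)) := by
  obtain ⟨m, hm⟩ : ∃ m, w.length = m + 1 :=
    ⟨w.length - 1, by have := List.length_pos_iff.2 hw; omega⟩
  have e1 : (List.range w.length).map (fun t => w.rotate (t + 1))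
      = (List.range m).map (fun t => w.rotate (t + 1)) ++ [w] := by
    rw [hm, List.range_succ, List.map_append, List.map_cons, List.map_nil]
    rw [show m + 1 = w.length from hm.symm, List.rotate_length]
  have e2 : (List.range w.length).map (fun t => w.rotate t)
      = w :: (List.range m).map (fun t => w.rotate (t + 1)) := by
    rw [hm, List.range_succ_eq_map, List.map_cons, List.rotate_zero, List.map_map]
    congr 1
  rw [e1, e2]
  exact List.perm_append_singleton _ _

end IETAux
/-- In the language of an arbitrary IET with permutation `π` (no regularity or minimality
assumption), every return word is `π`-clustering. -/
theorem returnWord_clustering {A : Type*} [Fintype A] [LinearOrder A] [Nonempty A]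
    (T : IET A) :
    ∀ u ∈ T.lang, ∀ w : List A, IsReturnWord T.lang u w → Clustering T.perm w := by
  classical
  intro u _hu w hw
  obtain ⟨hwu, hpre, _hsuf, hcnt⟩ := hw
  obtain ⟨x, hx, i, hword⟩ := hwu
  -- basic abbreviations
  have hlenwu : (w ++ u).length = w.length + u.length := by simp
  set n := w.length with hn_def
  set U := u.length with hU_def
  set c : ℕ → A := fun j => T.traj x (i + j) with hc_def
  set Y : ℕ → ℝ := fun j => T.map^[i + j] x with hY_def
  have hYd : ∀ j, Y j ∈ T.domain := fun j => T.iterate_mem_domain hx _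
  have hYseg : ∀ j, Y j ∈ T.seg (c j) := fun j => T.mem_seg_idx (hYd j)
  have hstep : ∀ j, Y (j + 1) = T.map (Y j) := by
    intro j
    show T.map^[i + (j + 1)] x = _
    rw [show i + (j + 1) = (i + j) + 1 by ring, Function.iterate_succ_apply']
  have hc_word : ∀ j (h : j < n + U), (w ++ u)[j]'(by rw [hlenwu]; exact h) = c j := by
    intro j h
    have h' : j < (w ++ u).length := by rw [hlenwu]; exact h
    have h1 : (List.map c (List.range (w ++ u).length))[j]? = some (c j) := by
      rw [List.getElem?_eq_getElem (by simpa [hlenwu] using h)]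
      simp
    rw [← hword] at h1
    rw [List.getElem?_eq_getElem h'] at h1
    exact Option.some.inj h1
  have hw_letter : ∀ t (h : t < n), w[t]'h = c t := by
    intro t h
    have h' := hc_word t (by omega)
    rw [← h']
    exact (List.getElem_append_left h).symm
  have hu_letter : ∀ t (h : t < U), u[t]'h = c (n + t) := by
    intro t h
    have h' := hc_word (n + t) (by omega)
    rw [← h']
    have : (w ++ u)[n + t]'(by rw [hlenwu]; omega) = u[(n + t) - w.length]'(by omega) :=
      List.getElem_append_right (by omega)
    rw [this]
    congr 1
    omega
  have hpre_letter : ∀ t (h : t < U), u[t]'h = c t := by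
    intro t h
    rw [hpre.getElem h]
    exact hc_word t (by omega)
  have occ_iff : ∀ p, p ≤ n →
      ((u <+: (w ++ u).drop p) ↔ ∀ t (h : t < U), u[t]'h = c (p + t)) := by
    intro p hp
    constructor
    · intro hocc t ht
      have h1 : t < ((w ++ u).drop p).length := by
        rw [List.length_drop, hlenwu]; omega
      rw [hocc.getElem ht, List.getElem_drop]
      exact hc_word (p + t) (by omega)
    · intro hall
      rw [List.prefix_iff_eq_take]
      apply List.ext_getElem
      · rw [List.length_take, List.length_drop, hlenwu]; omega
      · intro t h1 h2
        have h3 : t < ((w ++ u).drop p).length := by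
          rw [List.length_drop, hlenwu]; omega
        rw [List.getElem_take, List.getElem_drop]
        rw [hall t h1]
        exact (hc_word (p + t) (by omega)).symm
  have hP0 : u <+: (w ++ u).drop 0 := by simpa using hpre
  have hPn : u <+: (w ++ u).drop n := by
    rw [hn_def, List.drop_left]
  have hfilter_card : ∀ s : Finset ℕ,
      (s ⊆ ((List.range ((w ++ u).length + 1)).filter
        (fun i => decide (u <+: (w ++ u).drop i))).toFinset) → s.card ≤ 2 := by
    intro s hs
    have h1 := Finset.card_le_card hs
    rw [List.toFinset_card_of_nodup (List.nodup_range.filter _)] at h1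
    rw [← List.countP_eq_length_filter] at h1
    omega
  have hno : ∀ p, 0 < p → p < n → ¬ (u <+: (w ++ u).drop p) := by
    intro p hp0 hpn hocc
    have hsub : ({0, p, n} : Finset ℕ) ⊆ ((List.range ((w ++ u).length + 1)).filter
        (fun i => decide (u <+: (w ++ u).drop i))).toFinset := by
      intro q hq
      rw [List.mem_toFinset, List.mem_filter]
      simp only [Finset.mem_insert, Finset.mem_singleton] at hq
      rcases hq with rfl | rfl | rfl
      · exact ⟨List.mem_range.2 (by omega), by simpa using hP0⟩
      · exact ⟨List.mem_range.2 (by rw [hlenwu]; omega), by simpa using hocc⟩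
      · exact ⟨List.mem_range.2 (by rw [hlenwu]; omega), by simpa using hPn⟩
    have hcard : ({0, p, n} : Finset ℕ).card = 3 := by
      rw [Finset.card_insert_of_notMem (by simp; omega),
        Finset.card_insert_of_notMem (by simp; omega), Finset.card_singleton]
    have := hfilter_card _ hsub
    omega
  have hn_pos : 0 < n := by
    by_contra hcon
    have hn0 : n = 0 := by omega
    have hwnil : w = [] := List.length_eq_zero_iff.1 hn0
    rcases Nat.eq_zero_or_pos U with hU0 | hU1
    · have hunil : u = [] := List.length_eq_zero_iff.1 hU0
      subst hwnil; subst hunil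
      simp at hcnt
    · -- every satisfying position is 0
      have hsub : ((List.range ((w ++ u).length + 1)).filter
          (fun i => decide (u <+: (w ++ u).drop i))).toFinset ⊆ ({0} : Finset ℕ) := by
        intro q hq
        rw [List.mem_toFinset, List.mem_filter] at hq
        obtain ⟨hq1, hq2⟩ := hq
        have hq3 : u <+: (w ++ u).drop q := by simpa using hq2
        have hlen := hq3.length_le
        rw [List.length_drop, hlenwu] at hlen
        have hq4 : q < n + U + 1 := by
          rw [hlenwu] at hq1; exact List.mem_range.1 hq1
        simp only [Finset.mem_singleton]
        omega
      have h1 : ((List.range ((w ++ u).length + 1)).filter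
          (fun i => decide (u <+: (w ++ u).drop i))).toFinset.card ≤ 1 := by
        calc _ ≤ ({0} : Finset ℕ).card := Finset.card_le_card hsub
        _ = 1 := Finset.card_singleton 0
      rw [List.toFinset_card_of_nodup (List.nodup_range.filter _),
        ← List.countP_eq_length_filter] at h1
      omega
  have hu0 : U = 0 → n = 1 := by
    intro hU0
    have hunil : u = [] := List.length_eq_zero_iff.1 hU0
    have hall : (List.range ((w ++ u).length + 1)).countP
        (fun i => decide (u <+: (w ++ u).drop i)) = (List.range ((w ++ u).length + 1)).length :=
      List.countP_eq_length.2 (by intro a _; simp [hunil])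
    rw [hall, List.length_range, hlenwu] at hcnt
    omega
  -- the cyclic-letter agreement lemma
  have hG : ∀ j, 1 ≤ j → j ≤ n → ∀ t, t < (n - j) + min U n → c ((t + j) % n) = c (j + t) := by
    intro j hj1 hjn t ht
    by_cases hcase : t < n - j
    · rw [Nat.mod_eq_of_lt (by omega)]
      congr 1
      omega
    · push_neg at hcase
      set t' := t - (n - j) with ht'_def
      have h1 : t + j = n + t' := by omega
      have ht'U : t' < U := by omega
      have ht'n : t' < n := by omega
      rw [h1, Nat.add_mod_left, Nat.mod_eq_of_lt ht'n]
      have e1 : c t' = u[t']'ht'U := (hpre_letter t' ht'U).symm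
      have e2 : c (n + t') = u[t']'ht'U := (hu_letter t' ht'U).symm
      rw [e1, ← e2]
      congr 1
      omega
  -- the key comparison lemma
  have hkey : ∀ j j', 1 ≤ j → j ≤ n → 1 ≤ j' → j' ≤ n →
      w.rotate j' < w.rotate j → Y j' < Y j := by
    intro j j' hj1 hjn hj'1 hj'n hlt
    have hne : j ≠ j' := by
      rintro rfl
      exact absurd hlt (lt_irrefl _)
    have hlex : List.Lex (· < ·) (w.rotate j') (w.rotate j) := hlt
    obtain ⟨m, hm1, hm2, hag, hmlt⟩ := IETAux.lex_getElem hlex (by simp)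
    have hmn : m < n := by rw [List.length_rotate] at hm1; exact hm1
    have hjM1 : j ≤ max j j' := le_max_left j j'
    have hjM2 : j' ≤ max j j' := le_max_right j j'
    -- rewrite rotation letters via c
    have hrotc : ∀ k t (h1 : 1 ≤ k) (h2 : k ≤ n) (ht : t < (w.rotate k).length),
        (w.rotate k)[t] = c ((t + k) % n) := by
      intro k t h1 h2 ht
      rw [List.getElem_rotate]
      exact hw_letter _ (Nat.mod_lt _ (by omega))
    by_cases hcase : m < (n - max j j') + min U n
    · -- comparison resolves on genuine trajectories
      have hagree : ∀ t, t < m → c (j' + t) = c (j + t) := by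
        intro t ht
        have h1 := hag t (by rw [List.length_rotate]; omega) (by rw [List.length_rotate]; omega) ht
        rw [hrotc j' t hj'1 hj'n (by rw [List.length_rotate]; omega),
          hrotc j t hj1 hjn (by rw [List.length_rotate]; omega)] at h1
        rw [← hG j' hj'1 hj'n t (by omega), ← hG j hj1 hjn t (by omega)]
        exact h1
      have hfinal : c (j' + m) < c (j + m) := by
        have h1 := hmlt
        rw [hrotc j' m hj'1 hj'n hm1, hrotc j m hj1 hjn hm2] at h1
        rw [← hG j' hj'1 hj'n m (by omega), ← hG j hj1 hjn m (by omega)]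
        exact h1
      have hdiff : ∀ t, t ≤ m → Y (j + t) - Y (j' + t) = Y j - Y j' := by
        intro t
        induction t with
        | zero => intro _; simp
        | succ t ih =>
          intro h
          have ih' := ih (by omega)
          rw [show j + (t + 1) = (j + t) + 1 by ring, show j' + (t + 1) = (j' + t) + 1 by ring,
            hstep, hstep, T.map_eq (hYseg (j + t)), T.map_eq (hYseg (j' + t)),
            ← hagree t (by omega)]
          linarith
      have hYlt : Y (j' + m) < Y (j + m) := T.seg_lt hfinal (hYseg _) (hYseg _)
      have := hdiff m le_rfl
      linarith
    · -- impossible: internal occurrence of u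
      exfalso
      push_neg at hcase
      have hU1 : 1 ≤ U := by
        by_contra hcon
        have hn1 : n = 1 := hu0 (by omega)
        omega
      have hUn : U < n := by
        rcases le_or_gt n U with h | h
        · have : min U n = n := min_eq_right h
          omega
        · exact h
      have hminU : min U n = U := min_eq_left hUn.le
      have hjmM : min j j' < max j j' := min_lt_max.2 hne
      set p := min j j' + (n - max j j') with hp_def
      apply hno p (by omega) (by omega)
      rw [occ_iff p (by omega)]
      intro t ht
      have hSt : (n - max j j') + t < (n - min j j') + min U n := by omega
      have e1 : c (p + t) = c ((((n - max j j') + t) + min j j') % n) := by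
        rw [show p + t = min j j' + ((n - max j j') + t) by omega]
        exact (hG (min j j') (by omega) (by omega) ((n - max j j') + t) hSt).symm
      have e2 : c ((((n - max j j') + t) + min j j') % n)
          = c ((((n - max j j') + t) + max j j') % n) := by
        have hb1 : (n - max j j') + t < (w.rotate j').length := by
          rw [List.length_rotate]; omega
        have hb2 : (n - max j j') + t < (w.rotate j).length := by
          rw [List.length_rotate]; omega
        have h1 := hag ((n - max j j') + t) hb1 hb2 (by omega)
        rw [hrotc j' _ hj'1 hj'n hb1, hrotc j _ hj1 hjn hb2] at h1
        rcases le_total j j' with hor | hor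
        · rw [max_eq_right hor] at h1
          rw [min_eq_left hor, max_eq_right hor]
          exact h1.symm
        · rw [max_eq_left hor] at h1
          rw [min_eq_right hor, max_eq_left hor]
          exact h1
      have e3 : (((n - max j j') + t) + max j j') % n = t := by
        rw [show ((n - max j j') + t) + max j j' = n + t by omega, Nat.add_mod_left]
        exact Nat.mod_eq_of_lt (by omega)
      rw [hpre_letter t (by omega), e1, e2, e3]
  -- sorting of the indices 1..n by the position of Y
  set r : ℕ → ℕ → Prop := fun a b => Y a < Y b ∨ (Y a = Y b ∧ a ≤ b) with hr_def
  haveI hrdec : DecidableRel r := fun a b => Classical.propDecidable _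
  haveI : IsTrans ℕ r := by
    constructor
    intro a b d hab hbd
    rcases hab with h1 | ⟨h1, h1'⟩ <;> rcases hbd with h2 | ⟨h2, h2'⟩
    · exact Or.inl (h1.trans h2)
    · exact Or.inl (h2 ▸ h1)
    · exact Or.inl (h1 ▸ h2)
    · exact Or.inr ⟨h1.trans h2, h1'.trans h2'⟩
  haveI : IsAntisymm ℕ r := by
    constructor
    intro a b hab hba
    rcases hab with h1 | ⟨h1, h1'⟩ <;> rcases hba with h2 | ⟨h2, h2'⟩
    · exact absurd (h1.trans h2) (lt_irrefl _)
    · exact absurd h1 (h2 ▸ lt_irrefl _)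
    · exact absurd h2 (h1 ▸ lt_irrefl _)
    · omega
  haveI : IsTotal ℕ r := by
    constructor
    intro a b
    rcases lt_trichotomy (Y a) (Y b) with h | h | h
    · exact Or.inl (Or.inl h)
    · rcases le_total a b with h' | h'
      · exact Or.inl (Or.inr ⟨h, h'⟩)
      · exact Or.inr (Or.inr ⟨h.symm, h'⟩)
    · exact Or.inr (Or.inl h)
  set idxs₀ : List ℕ := (List.range n).map (· + 1) with hidxs₀_def
  set idxs : List ℕ := Multiset.sort (idxs₀ : Multiset ℕ) r with hidxs_def
  have hperm : idxs.Perm idxs₀ := by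
    rw [← Multiset.coe_eq_coe, hidxs_def]
    exact Multiset.sort_eq _ r
  have hsorted : List.Pairwise r idxs := Multiset.pairwise_sort _ r
  have hmem : ∀ j ∈ idxs, 1 ≤ j ∧ j ≤ n := by
    intro j hj
    have hj0 : j ∈ idxs₀ := hperm.mem_iff.1 hj
    rw [hidxs₀_def, List.mem_map] at hj0
    obtain ⟨t, ht, rfl⟩ := hj0
    rw [List.mem_range] at ht
    omega
  have hrot_le : ∀ j j', 1 ≤ j → j ≤ n → 1 ≤ j' → j' ≤ n → r j j' →
      w.rotate j ≤ w.rotate j' := by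
    intro j j' h1 h2 h3 h4 hr
    by_contra hcon
    have hlt : w.rotate j' < w.rotate j := lt_of_not_ge hcon
    have := hkey j j' h1 h2 h3 h4 hlt
    rcases hr with h | ⟨h, _⟩ <;> linarith
  set R' : List (List A) := idxs.map (fun j => w.rotate j) with hR'_def
  have hR'sorted : List.Pairwise (· ≤ ·) R' := by
    rw [hR'_def, List.pairwise_map]
    refine List.Pairwise.imp_of_mem ?_ hsorted
    intro a b ha hb hr
    exact hrot_le a b (hmem a ha).1 (hmem a ha).2 (hmem b hb).1 (hmem b hb).2 hr
  have hR'perm : R'.Perm ((List.range n).map (w.rotate ·)) := by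
    have h1 : R'.Perm (idxs₀.map (fun j => w.rotate j)) := hperm.map _
    have h2 : idxs₀.map (fun j => w.rotate j) = (List.range n).map (fun t => w.rotate (t + 1)) := by
      rw [hidxs₀_def, List.map_map]
      rfl
    rw [h2] at h1
    refine h1.trans ?_
    have hwne : w ≠ [] := by
      intro hc
      rw [hc] at hn_def
      simp [hn_def] at hn_pos
    exact IETAux.rotate_perm_shift w hwne
  have hsort_eq : Multiset.sort
      (↑((List.range w.length).map (fun k => w.rotate k)) : Multiset (List A)) (· ≤ ·) = R' := by
    have hp : (Multiset.sort
        (↑((List.range w.length).map (fun k => w.rotate k)) : Multiset (List A)) (· ≤ ·)).Perm R' := by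
      rw [← Multiset.coe_eq_coe, Multiset.sort_eq]
      exact Multiset.coe_eq_coe.2 hR'perm.symm
    exact hp.eq_of_pairwise' (Multiset.pairwise_sort _ _) hR'sorted
  have hbwt : bwt w = idxs.map (fun j => c (j - 1)) := by
    unfold bwt
    rw [hsort_eq, hR'_def, List.filterMap_map]
    apply IETAux.filterMap_eq_map'
    intro j hj
    obtain ⟨hj1, hjn⟩ := hmem j hj
    show (w.rotate j).getLast? = _
    rw [List.getLast?_eq_getElem?, List.length_rotate]
    have hlt : n - 1 < (w.rotate j).length := by rw [List.length_rotate]; omega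
    rw [List.getElem?_eq_getElem (by rw [List.length_rotate] at hlt ⊢; exact hlt)]
    congr 1
    rw [List.getElem_rotate]
    have harith : (n - 1 + j) % w.length = j - 1 := by
      rw [show n - 1 + j = n + (j - 1) by omega, ← hn_def, Nat.add_mod_left]
      exact Nat.mod_eq_of_lt (by omega)
    rw [hw_letter ((n - 1 + j) % w.length) (by rw [harith]; omega)]
    rw [harith]
  -- positions of Y j within the image intervals determined by the last letters
  have himg : ∀ j, 1 ≤ j → j ≤ n →
      Y j ∈ Set.Ico (T.imgLeft (c (j - 1))) (T.imgLeft (c (j - 1)) + T.len (c (j - 1))) := by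
    intro j h1 h2
    have hst := hstep (j - 1)
    rw [show (j - 1) + 1 = j by omega] at hst
    rw [hst]
    exact T.map_mem_img (hYseg (j - 1))
  have hlast_sorted : List.Pairwise (fun a b : A => T.perm.symm a ≤ T.perm.symm b)
      (idxs.map (fun j => c (j - 1))) := by
    rw [List.pairwise_map]
    refine List.Pairwise.imp_of_mem ?_ hsorted
    intro a b ha hb hr
    obtain ⟨ha1, ha2⟩ := hmem a ha
    obtain ⟨hb1, hb2⟩ := hmem b hb
    have hYa := himg a ha1 ha2
    have hYb := himg b hb1 hb2
    have hYle : Y a ≤ Y b := by rcases hr with h | ⟨h, _⟩ <;> exact h.le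
    by_contra hcon
    have hlt : T.perm.symm (c (b - 1)) < T.perm.symm (c (a - 1)) := lt_of_not_ge hcon
    have := T.img_lt hlt hYb hYa
    linarith
  have hTgt_sorted : List.Pairwise (fun a b : A => T.perm.symm a ≤ T.perm.symm b)
      ((Finset.univ.sort (· ≤ ·)).map
        (fun a => List.replicate (w.count (T.perm a)) (T.perm a))).flatten := by
    refine List.pairwise_flatten.2 ⟨?_, ?_⟩
    · intro l hl
      obtain ⟨a, _, rfl⟩ := List.mem_map.1 hl
      exact List.pairwise_replicate.2 (Or.inr (le_refl _))
    · rw [List.pairwise_map]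
      have hs := (Finset.sortedLT_sort (Finset.univ : Finset A)).pairwise
      refine hs.imp ?_
      intro a b hab
      intro y hy z hz
      rw [List.eq_of_mem_replicate hy, List.eq_of_mem_replicate hz]
      simp only [Equiv.symm_apply_apply]
      exact hab.le
  have hmapc : (List.range n).map (fun t => c t) = w := by
    apply List.ext_getElem
    · simp [hn_def]
    · intro t h1 h2
      rw [List.getElem_map, List.getElem_range]
      exact (hw_letter t h2).symm
  have hperm1 : (idxs.map (fun j => c (j - 1))).Perm w := by
    have h1 : (idxs.map (fun j => c (j - 1))).Perm (idxs₀.map (fun j => c (j - 1))) := hperm.map _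
    have h2 : idxs₀.map (fun j => c (j - 1)) = (List.range n).map (fun t => c t) := by
      rw [hidxs₀_def, List.map_map]
      apply List.map_congr_left
      intro t _
      show c (t + 1 - 1) = c t
      simp
    rw [h2, hmapc] at h1
    exact h1
  have hperm2 : ((Finset.univ.sort (· ≤ ·)).map
      (fun a => List.replicate (w.count (T.perm a)) (T.perm a))).flatten.Perm w := by
    rw [List.perm_iff_count]
    intro a0
    rw [List.count_flatten, List.map_map]
    have hcongr : (Finset.univ.sort (· ≤ ·)).map
        ((List.count a0) ∘ (fun a => List.replicate (w.count (T.perm a)) (T.perm a)))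
        = (Finset.univ.sort (· ≤ ·)).map
          (fun a => if a = T.perm.symm a0 then w.count (T.perm a) else 0) := by
      apply List.map_congr_left
      intro a _
      show List.count a0 (List.replicate (w.count (T.perm a)) (T.perm a)) = _
      rw [List.count_replicate]
      by_cases h : a = T.perm.symm a0
      · have : T.perm a = a0 := by rw [h]; simp
        simp [h, this]
      · have : T.perm a ≠ a0 := by
          intro hc
          apply h
          rw [← hc]
          simp
        simp [h, this]
    rw [hcongr]
    rw [IETAux.sum_map_single (fun a => w.count (T.perm a)) (T.perm.symm a0) _
      (Finset.sort_nodup _ _) (by rw [Finset.mem_sort]; exact Finset.mem_univ _)]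
    simp
  haveI : IsAntisymm A (fun a b : A => T.perm.symm a ≤ T.perm.symm b) :=
    ⟨fun a b h1 h2 => T.perm.symm.injective (le_antisymm h1 h2)⟩
  show bwt w = _
  rw [hbwt]
  exact (hperm1.trans hperm2.symm).eq_of_pairwise' hlast_sorted hTgt_sorted
end

section
/- Let w be a primitive word over an alphabet A, let a ∈ A, and let b be a letter distinct from a (with b either in A or a new letter not in A). Then α_{a,b}(w) is primitive, where α_{a,b} is the monoid morphism fixing every letter c ≠ a and sending a to the two-letter word ab. -/
private def decAB {α : Type*} [DecidableEq α] (a : α) : List α → List α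
  | [] => []
  | x :: xs => if x = a then x :: decAB a (xs.drop 1) else x :: decAB a xs
termination_by l => l.length
decreasing_by all_goals (simp [List.length_drop]; try omega)

private lemma decAB_flatMap {α : Type*} [DecidableEq α] (a b : α) :
    ∀ u : List α, decAB a (u.flatMap fun c => if c = a then [a, b] else [c]) = u := by
  intro u
  induction u with
  | nil => simp [decAB]
  | cons c u ih =>
    by_cases hc : c = a
    · subst hc
      simp only [List.flatMap_cons, eq_self_iff_true, if_true]
      rw [show ([c, b] ++ u.flatMap fun c' => if c' = c then [c, b] else [c']) =
        c :: b :: (u.flatMap fun c' => if c' = c then [c, b] else [c']) from rfl]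
      rw [decAB, if_pos rfl]
      simp [ih]
    · simp only [List.flatMap_cons, if_neg hc, List.singleton_append]
      rw [decAB, if_neg hc, ih]

private lemma flatMap_decAB {α : Type*} [DecidableEq α] (a b : α) :
    ∀ x : List α, (∀ i, x[i]? = some a → x[i+1]? = some b) →
      (decAB a x).flatMap (fun c => if c = a then [a, b] else [c]) = x := by
  have key : ∀ (n : ℕ) (x : List α), x.length ≤ n →
      (∀ i, x[i]? = some a → x[i+1]? = some b) →
      (decAB a x).flatMap (fun c => if c = a then [a, b] else [c]) = x := by
    intro n
    induction n with
    | zero => intro x hx _; rw [List.length_eq_zero_iff.mp (Nat.le_zero.mp hx)]; simp [decAB]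
    | succ n ih =>
      intro x hx hP
      match x with
      | [] => simp [decAB]
      | c :: xs =>
        by_cases hc : c = a
        · subst hc
          have h0 : (c :: xs)[1]? = some b := hP 0 (by simp)
          match xs with
          | [] => simp at h0
          | y :: t =>
            simp only [List.getElem?_cons_succ, List.getElem?_cons_zero,
              Option.some.injEq] at h0
            rw [h0]
            rw [decAB, if_pos rfl]
            simp only [List.drop_succ_cons, List.drop_zero, List.flatMap_cons, eq_self_iff_true, if_true]
            have ht : (decAB c t).flatMap (fun c' => if c' = c then [c, b] else [c']) = t := by
              apply ih
              · simp at hx ⊢; omega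
              · intro i hi
                have := hP (i + 2) (by simpa using hi)
                simpa using this
            rw [ht]
            simp
        · rw [decAB, if_neg hc]
          simp only [List.flatMap_cons, if_neg hc, List.singleton_append]
          congr 1
          apply ih
          · simp at hx ⊢; omega
          · intro i hi
            have := hP (i + 1) (by simpa using hi)
            simpa using this
  intro x hx
  exact key x.length x le_rfl hx

private lemma goodAB {α : Type*} [DecidableEq α] (a b : α) (hab : a ≠ b) :
    ∀ (u : List α) (i : ℕ), (u.flatMap fun c => if c = a then [a, b] else [c])[i]? = some a →
      (u.flatMap fun c => if c = a then [a, b] else [c])[i+1]? = some b := by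
  intro u
  induction u with
  | nil => intro i hi; simp at hi
  | cons c u ih =>
    intro i hi
    by_cases hc : c = a
    · subst hc
      simp only [List.flatMap_cons, eq_self_iff_true, if_true] at hi ⊢
      match i with
      | 0 => simp
      | 1 =>
        exfalso
        rw [show ([c, b] ++ u.flatMap fun c' => if c' = c then [c, b] else [c']) =
          c :: b :: (u.flatMap fun c' => if c' = c then [c, b] else [c']) from rfl] at hi
        simp at hi
        exact hab hi.symm
      | (k + 2) =>
        rw [show ([c, b] ++ u.flatMap fun c' => if c' = c then [c, b] else [c']) =
          c :: b :: (u.flatMap fun c' => if c' = c then [c, b] else [c']) from rfl] at hi ⊢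
        simp only [List.getElem?_cons_succ] at hi ⊢
        exact ih k hi
    · simp only [List.flatMap_cons, if_neg hc, List.singleton_append] at hi ⊢
      match i with
      | 0 => simp at hi; exact absurd hi hc
      | (k + 1) =>
        simp only [List.getElem?_cons_succ] at hi ⊢
        exact ih k hi

private lemma wordPow_length {A : Type*} (u : List A) (m : ℕ) :
    (wordPow u m).length = m * u.length := by
  induction m with
  | zero => simp [wordPow]
  | succ n ih => simp [wordPow, ih]; ring

private lemma wordPow_succ' {A : Type*} (u : List A) (m : ℕ) :
    wordPow u (m + 1) = wordPow u m ++ u := by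
  induction m with
  | zero => simp [wordPow]
  | succ n ih =>
    rw [show wordPow u (n + 1 + 1) = u ++ wordPow u (n + 1) from rfl, ih,
      ← List.append_assoc, show u ++ wordPow u n = wordPow u n ++ u from ih]

private lemma flatMap_wordPow {α β : Type*} (f : α → List β) (u : List α) (m : ℕ) :
    (wordPow u m).flatMap f = wordPow (u.flatMap f) m := by
  induction m with
  | zero => simp [wordPow]
  | succ n ih => simp [wordPow, ih]

/-- The image of a primitive word under the morphism `α_{a,b} : a ↦ ab` (fixing all other
letters) is primitive. -/
theorem primitive_alpha {α : Type*} [DecidableEq α] (w : List α) (hw : Primitive w)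
    (a b : α) (hab : a ≠ b) :
    Primitive (w.flatMap fun c => if c = a then [a, b] else [c]) := by
  intro v m hvm
  have hwne : w ≠ [] := by
    intro h
    exact absurd (hw [] 0 (by rw [h]; rfl)) (by norm_num)
  match m with
  | 0 =>
    exfalso
    rw [show wordPow v 0 = [] from rfl, List.flatMap_eq_nil_iff] at hvm
    match w with
    | [] => exact hwne rfl
    | c :: _ =>
      have := hvm c (by simp)
      by_cases hc : c = a <;> simp [hc] at this
  | (m + 1) =>
    -- v satisfies the "every a followed by b" property
    have hP : ∀ i, v[i]? = some a → v[i+1]? = some b := by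
      intro i hi
      have hiL : i < v.length := by
        by_contra h
        rw [List.getElem?_eq_none (Nat.le_of_not_lt h)] at hi
        cases hi
      have hgood := goodAB a b hab w
      rw [hvm] at hgood
      have hsplit : wordPow v (m + 1) = wordPow v m ++ v := wordPow_succ' v m
      have hlen : (wordPow v m).length = m * v.length := wordPow_length v m
      have h1 : (wordPow v (m+1))[m * v.length + i]? = some a := by
        rw [hsplit, List.getElem?_append_right (by omega), hlen]
        simpa [Nat.add_sub_cancel_left] using hi
      have h2 := hgood _ h1
      by_cases hcase : i + 1 < v.length
      · rw [hsplit, List.getElem?_append_right (by omega), hlen,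
          show m * v.length + i + 1 - m * v.length = i + 1 by omega] at h2
        exact h2
      · exfalso
        have hieq : i + 1 = v.length := by omega
        have h3 : (m + 1) * v.length = m * v.length + v.length := by ring
        rw [List.getElem?_eq_none (by rw [wordPow_length]; omega)] at h2
        cases h2
    have hv : (decAB a v).flatMap (fun c => if c = a then [a, b] else [c]) = v :=
      flatMap_decAB a b v hP
    have : w.flatMap (fun c => if c = a then [a, b] else [c]) =
        (wordPow (decAB a v) (m+1)).flatMap (fun c => if c = a then [a, b] else [c]) := by
      rw [flatMap_wordPow, hv, hvm]
    have hw' : w = wordPow (decAB a v) (m + 1) := by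
      have := congrArg (decAB a) this
      rwa [decAB_flatMap a b, decAB_flatMap a b] at this
    exact hw (decAB a v) (m + 1) hw'
end

section
/- Let w be a primitive word over an alphabet A, let a ∈ A, and let b be a letter distinct from a (with b either in A or a new letter not in A). Then α̃_{a,b}(w) is primitive, where α̃_{a,b} is the monoid morphism fixing every letter c ≠ a and sending a to the two-letter word ba. -/
section Aux

variable {α : Type*} [DecidableEq α]

def dec (a b : α) : List α → List α
  | [] => []
  | [c] => [c]
  | x :: y :: t => if x = b ∧ y = a then a :: dec a b t else x :: dec a b (y :: t)

lemma dec_append (a b : α) (z : List α) (hz : z.head? ≠ some a) :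
    ∀ v : List α, dec a b (v ++ z) = dec a b v ++ dec a b z := by
  intro v
  induction v using dec.induct a b with
  | case1 => simp [dec]
  | case2 c =>
    cases z with
    | nil => simp [dec]
    | cons h t =>
      have : h ≠ a := by simpa using hz
      simp [dec, this]
  | case3 x y t h ih => simp [dec, h, ih]
  | case4 x y t h ih =>
    simp only [List.cons_append, dec, if_neg h]
    simp only [List.cons_append] at ih
    rw [ih]

lemma flatMap_head_ne (a b : α) (hab : a ≠ b) (w : List α) :
    (w.flatMap fun c => if c = a then [b, a] else [c]).head? ≠ some a := by
  cases w with
  | nil => simp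
  | cons c t =>
    rw [List.flatMap_cons]
    by_cases hc : c = a
    · subst hc; simp [Ne.symm hab]
    · simp [hc]

lemma dec_flatMap (a b : α) (hab : a ≠ b) (w : List α) :
    dec a b (w.flatMap fun c => if c = a then [b, a] else [c]) = w := by
  induction w with
  | nil => simp [dec]
  | cons c t ih =>
    rw [List.flatMap_cons]
    by_cases hc : c = a
    · subst hc
      simp only [if_pos rfl]
      show dec c b (b :: c :: _) = _
      rw [dec, if_pos ⟨rfl, rfl⟩]
      simpa using ih
    · rw [if_neg hc,
        dec_append a b _ (flatMap_head_ne a b hab t) [c], ih]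
      simp [dec]

lemma wordPow_nil (m : ℕ) : wordPow ([] : List α) m = [] := by
  induction m with
  | zero => rfl
  | succ n ih => simp [wordPow, ih]

lemma dec_wordPow (a b : α) (v : List α) (hv : v.head? ≠ some a) (m : ℕ) :
    dec a b (wordPow v m) = wordPow (dec a b v) m := by
  induction m with
  | zero => simp [wordPow, dec]
  | succ n ih =>
    have hpow : (wordPow v n).head? ≠ some a := by
      cases n with
      | zero => simp [wordPow]
      | succ k =>
        cases v with
        | nil => simp [wordPow_nil]
        | cons c t => simpa [wordPow] using hv
    rw [wordPow, dec_append a b _ hpow v, ih, wordPow]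

lemma flatMap_eq_nil_iff (a b : α) (w : List α) :
    (w.flatMap fun c => if c = a then [b, a] else [c]) = [] ↔ w = [] := by
  cases w with
  | nil => simp
  | cons c t =>
    constructor
    · intro h
      rw [List.flatMap_cons] at h
      by_cases hc : c = a <;> simp [hc] at h
    · intro h; simp at h


end Aux

/-- The image of a primitive word under the morphism `α̃_{a,b} : a ↦ ba` (fixing all other
letters) is primitive. -/
theorem primitive_alphaTilde {α : Type*} [DecidableEq α] (w : List α) (hw : Primitive w)
    (a b : α) (hab : a ≠ b) :
    Primitive (w.flatMap fun c => if c = a then [b, a] else [c]) := by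
  intro v m hm
  by_cases hwnil : w = []
  · subst hwnil
    simp only [List.flatMap_nil] at hm
    exact hw v m hm
  · have hfw : (w.flatMap fun c => if c = a then [b, a] else [c]) ≠ [] := by
      intro h; exact hwnil ((flatMap_eq_nil_iff a b w).mp h)
    have hvhead : v.head? ≠ some a := by
      cases m with
      | zero => exact absurd hm (by simpa [wordPow] using hfw)
      | succ n =>
        cases v with
        | nil => simp
        | cons c t =>
          have : (w.flatMap fun c => if c = a then [b, a] else [c]).head? = some c := by
            rw [hm]; simp [wordPow]
          intro hc
          simp only [List.head?_cons] at hc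
          exact flatMap_head_ne a b hab w (hc ▸ this)
    have : w = wordPow (dec a b v) m := by
      rw [← dec_flatMap a b hab w, hm, dec_wordPow a b v hvhead m]
    exact hw _ m this
end

section
/- Let w be a primitive word over the ordered alphabet A = {a_1 < … < a_k} which is π-clustering for a permutation π of A. Let a, b ∈ A with b = a_1 (the smallest letter), and suppose there is an index i with 1 ≤ i < k such that π⁻¹(a) = a_i and π⁻¹(b) = a_{i+1}. Then there exists a permutation π' of A such that α_{a,b}(w) is π'-clustering for A, where α_{a,b} is the monoid morphism sending a to ab and fixing all other letters. -/
set_option linter.unusedVariables false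
set_option linter.unusedSectionVars false
set_option maxHeartbeats 1000000

open List

open List

section Aux

variable {A : Type*} [LinearOrder A]


/-- the block morphism -/
def mr (a b c : A) : List A := if c = a then [a, b] else [c]

/-- α_{a,b} -/
def af (a b : A) (l : List A) : List A := l.flatMap (mr a b)

/-- replace a by b -/
def sg (a b c : A) : A := if c = a then b else c

variable {a b : A}

lemma af_nil : af a b [] = [] := rfl

lemma af_cons (c : A) (t : List A) : af a b (c :: t) = mr a b c ++ af a b t := by
  simp [af, mr]

lemma af_append (x y : List A) : af a b (x ++ y) = af a b x ++ af a b y := by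
  simp [af]

lemma af_singleton (c : A) : af a b [c] = mr a b c := by
  simp [af]

lemma af_head (c : A) (t : List A) :
    af a b (c :: t) = c :: (if c = a then b :: af a b t else af a b t) := by
  rw [af_cons, mr]
  by_cases h : c = a
  · subst h; simp
  · simp [h]

lemma af_ne_nil {l : List A} (h : l ≠ []) : af a b l ≠ [] := by
  obtain ⟨c, t, rfl⟩ := exists_cons_of_ne_nil h
  rw [af_head]; split <;> simp

lemma length_af (l : List A) : (af a b l).length = l.length + l.count a := by
  induction l with
  | nil => simp [af_nil]
  | cons c t ih =>
    rw [af_cons, length_append, ih, count_cons, mr]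
    by_cases h : c = a <;> simp [h] <;> omega

lemma getLastD_af {l : List A} (h : l ≠ []) (d : A) :
    (af a b l).getLastD d = sg a b (l.getLastD d) := by
  induction l using List.reverseRecOn with
  | nil => exact absurd rfl h
  | append_singleton t c _ =>
    rw [af_append, af_singleton, getLastD_concat, sg, mr]
    by_cases hc : c = a
    · subst hc
      rw [if_pos rfl, if_pos rfl,
        show af c b t ++ [c, b] = (af c b t ++ [c]) ++ [b] by simp, getLastD_concat]
    · rw [if_neg hc, if_neg hc, getLastD_concat]

lemma sg_ne_a (hab : a ≠ b) (c : A) : sg a b c ≠ a := by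
  unfold sg; split
  · exact hab.symm
  · assumption

/-! ### Lex order lemmas -/

lemma cons_lt_cons_iff' {c : A} {x y : List A} : c :: x < c :: y ↔ x < y := by
  rw [List.cons_lt_cons_iff]; simp

lemma cons_le_cons_iff' {c : A} {x y : List A} : c :: x ≤ c :: y ↔ x ≤ y := by
  rw [← not_lt, ← not_lt, cons_lt_cons_iff']

lemma cons_lt_cons_of_ne {c d : A} (h : c ≠ d) {x y : List A} :
    c :: x < d :: y ↔ c < d := by
  constructor
  · intro hlt
    cases hlt with
    | rel h => exact h
    | cons h' => exact absurd rfl h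
  · exact fun h => List.Lex.rel h

lemma append_lt_append_iff_left (p : List A) {x y : List A} :
    p ++ x < p ++ y ↔ x < y := by
  induction p with
  | nil => rfl
  | cons c t ih => simpa [cons_lt_cons_iff'] using ih

lemma append_lt_append_of_ne {x y : List A} (hl : x.length = y.length) (hne : x ≠ y)
    (s t : List A) : x ++ s < y ++ t ↔ x < y := by
  induction x generalizing y with
  | nil =>
    cases y with
    | nil => exact absurd rfl hne
    | cons d y' => simp at hl
  | cons c x' ih =>
    cases y with
    | nil => simp at hl
    | cons d y' =>
      by_cases hcd : c = d
      · subst hcd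
        simp only [cons_append, cons_lt_cons_iff']
        exact ih (by simpa using hl) (by simpa using hne)
      · simp only [cons_append, cons_lt_cons_of_ne hcd]

lemma af_lt_af_iff {x y : List A} (hl : x.length = y.length) :
    x < y ↔ af a b x < af a b y := by
  induction x generalizing y with
  | nil =>
    cases y with
    | nil => simp [af_nil]
    | cons d y' => simp at hl
  | cons c x' ih =>
    cases y with
    | nil => simp at hl
    | cons d y' =>
      by_cases hcd : c = d
      · subst hcd
        rw [cons_lt_cons_iff', af_cons, af_cons, append_lt_append_iff_left]
        exact ih (by simpa using hl)
      · rw [cons_lt_cons_of_ne hcd, af_head, af_head]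
        rcases lt_trichotomy c d with h | h | h
        · exact iff_of_true h (List.Lex.rel h)
        · exact absurd h hcd
        · exact iff_of_false (not_lt_of_gt h)
            (fun hx => absurd ((cons_lt_cons_of_ne hcd).mp hx) (not_lt_of_gt h))

lemma af_le_af_iff {x y : List A} (hl : x.length = y.length) :
    x ≤ y ↔ af a b x ≤ af a b y := by
  rw [← not_lt, ← not_lt, af_lt_af_iff hl.symm]


lemma rotate_af_O {w : List A} {s : ℕ} (hs : s ≤ w.length) :
    (af a b w).rotate ((af a b (w.take s)).length) = af a b (w.rotate s) := by
  have hsplit : af a b w = af a b (w.take s) ++ af a b (w.drop s) := by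
    rw [← af_append, take_append_drop]
  have hle : (af a b (w.take s)).length ≤ (af a b w).length := by
    rw [hsplit, length_append]; omega
  rw [rotate_eq_drop_append_take hle, rotate_eq_drop_append_take hs, af_append, hsplit,
    drop_left, take_left]

lemma rotate_af_O_succ {w : List A} {s : ℕ} (hs : s < w.length) (ha : w[s] = a) :
    (af a b w).rotate ((af a b (w.take s)).length + 1) =
      b :: (af a b (w.drop (s + 1) ++ w.take s) ++ [a]) := by
  rw [← rotate_rotate, rotate_af_O (le_of_lt hs), rotate_eq_drop_append_take (le_of_lt hs),
    ← List.getElem_cons_drop hs, ha, cons_append, af_head]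
  rw [if_pos rfl, rotate_cons_succ, rotate_zero, cons_append]

lemma flatten_map_cons_perm {α β : Type*} (g : α → List β) (gg : α → β) (l : List α) :
    (l.map (fun x => gg x :: g x)).flatten ~ l.map gg ++ (l.map g).flatten := by
  induction l with
  | nil => simp
  | cons x t ih =>
    simp only [map_cons, flatten_cons, cons_append]
    refine Perm.cons _ ?_
    calc g x ++ (t.map (fun x => gg x :: g x)).flatten
        ~ g x ++ (t.map gg ++ (t.map g).flatten) := Perm.append_left _ ih
      _ ~ (g x ++ t.map gg) ++ (t.map g).flatten := by rw [append_assoc]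
      _ ~ (t.map gg ++ g x) ++ (t.map g).flatten := Perm.append_right _ perm_append_comm
      _ ~ t.map gg ++ (g x ++ (t.map g).flatten) := by rw [append_assoc]

lemma flatten_map_ite {α β : Type*} (P : α → Prop) [DecidablePred P] (h : α → β) (l : List α) :
    (l.map (fun x => if P x then [h x] else [])).flatten =
      (l.filter (fun x => decide (P x))).map h := by
  induction l with
  | nil => simp
  | cons x t ih =>
    simp only [map_cons, flatten_cons, filter_cons]
    by_cases hx : P x <;> simp [hx, ih]

lemma I_eq_range (w : List A) :
    ((range w.length).map (fun s =>
        if w.getD s a = a then [(af a b (w.take s)).length, (af a b (w.take s)).length + 1]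
        else [(af a b (w.take s)).length])).flatten = range (af a b w).length := by
  induction w using List.reverseRecOn with
  | nil => simp [af_nil]
  | append_singleton t c ih =>
    rw [length_append, length_singleton, range_succ, map_append, flatten_append]
    have h1 : ((range t.length).map (fun s =>
        if (t ++ [c]).getD s a = a then [(af a b ((t ++ [c]).take s)).length,
          (af a b ((t ++ [c]).take s)).length + 1]
        else [(af a b ((t ++ [c]).take s)).length])).flatten = range (af a b t).length := by
      rw [map_congr_left (fun s hs => ?_), ih]
      have hs' : s < t.length := mem_range.mp hs
      rw [getD_append _ _ _ _ hs', take_append_of_le_length (le_of_lt hs')]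
    rw [h1]
    have h2 : (t ++ [c]).getD t.length a = c := by
      rw [getD_append_right _ _ _ _ le_rfl, Nat.sub_self]; rfl
    have h3 : (t ++ [c]).take t.length = t := take_left
    simp only [map_cons, map_nil, flatten_cons, flatten_nil, append_nil, h2, h3]
    rw [af_append, af_singleton, mr, length_append]
    by_cases hc : c = a
    · rw [if_pos hc, if_pos hc, length_cons, length_cons, length_nil]
      rw [show (af a b t).length + (0 + 1 + 1) = ((af a b t).length + 1) + 1 by ring,
        range_succ, range_succ, append_assoc]
      simp
    · rw [if_neg hc, if_neg hc, length_cons, length_nil, range_succ]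

lemma rotations_decomp (w : List A) :
    (range (af a b w).length).map ((af a b w).rotate ·) ~
      ((range w.length).map (fun s => af a b (w.rotate s))) ++
      (((range w.length).filter (fun s => decide (w.getD s a = a))).map
          (fun s => b :: (af a b (w.drop (s + 1) ++ w.take s) ++ [a]))) := by
  rw [← I_eq_range w, ← flatten_map_ite (fun s => w.getD s a = a)
      (fun s => b :: (af a b (w.drop (s + 1) ++ w.take s) ++ [a])) (range w.length)]
  rw [map_flatten, map_map]
  have hcongr : ∀ s ∈ range w.length,
      ((fun l : List ℕ => l.map ((af a b w).rotate ·)) ∘ (fun s =>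
        if w.getD s a = a then [(af a b (w.take s)).length, (af a b (w.take s)).length + 1]
        else [(af a b (w.take s)).length])) s =
      (fun s => af a b (w.rotate s) ::
        (if w.getD s a = a then [b :: (af a b (w.drop (s + 1) ++ w.take s) ++ [a])] else [])) s := by
    intro s hs
    have hs' : s < w.length := mem_range.mp hs
    by_cases hP : w.getD s a = a
    · have ha' : w[s] = a := by rwa [getD_eq_getElem _ _ hs'] at hP
      simp only [Function.comp_apply, if_pos hP, map_cons, map_nil]
      rw [rotate_af_O (le_of_lt hs'), rotate_af_O_succ hs' ha']
    · simp only [Function.comp_apply, if_neg hP, map_cons, map_nil]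
      rw [rotate_af_O (le_of_lt hs')]
  rw [map_congr_left hcongr]
  exact flatten_map_cons_perm
    (fun s => if w.getD s a = a then [b :: (af a b (w.drop (s + 1) ++ w.take s) ++ [a])] else [])
    (fun s => af a b (w.rotate s)) (range w.length)




lemma filterMap_getLast?_eq (L : List (List A)) (h : ∀ l ∈ L, l ≠ []) (d : A) :
    L.filterMap List.getLast? = L.map (fun l => l.getLastD d) := by
  induction L with
  | nil => simp
  | cons x t ih =>
    have hx : x ≠ [] := h x mem_cons_self
    rw [filterMap_cons_some (getLast?_eq_getLast hx), map_cons,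
      ih (fun l hl => h l (mem_cons_of_mem _ hl))]
    congr 1
    rw [getLastD_eq_getLast?, getLast?_eq_getLast hx]
    rfl

lemma getLastD_rotate {v : List A} (hv : v ≠ []) (d : A) {i : ℕ} (hi : i < v.length) :
    (v.rotate i).getLastD d = v.getD ((i + (v.length - 1)) % v.length) d := by
  have hn : 0 < v.length := length_pos_of_ne_nil hv
  rcases Nat.eq_zero_or_pos i with rfl | hipos
  · rw [rotate_zero, Nat.zero_add, Nat.mod_eq_of_lt (by omega)]
    rw [getLastD_eq_getLast?, getLast?_eq_getElem?, getD_eq_getElem?_getD]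
  · have hmod : (i + (v.length - 1)) % v.length = i - 1 := by
      have : i + (v.length - 1) = (i - 1) + v.length := by omega
      rw [this, Nat.add_mod_right, Nat.mod_eq_of_lt (by omega)]
    rw [hmod, rotate_eq_drop_append_take (le_of_lt hi)]
    rw [getLastD_eq_getLast?, getLast?_append, getLast?_eq_getElem?]
    have hlt : (v.take i).length - 1 = i - 1 := by
      rw [length_take, Nat.min_eq_left (le_of_lt hi)]
    rw [hlt]
    have : (v.take i)[i - 1]? = v[i - 1]? := by
      rw [getElem?_take]
      simp only [if_pos (by omega : i - 1 < i)]
    rw [this, getD_eq_getElem?_getD]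
    cases hvv : v[i - 1]? with
    | none =>
      exfalso
      rw [getElem?_eq_none_iff] at hvv
      omega
    | some x => simp

lemma map_getD_range (v : List A) (d : A) :
    (range v.length).map (fun i => v.getD i d) = v := by
  apply List.ext_getElem (by simp)
  intro j h1 h2
  simp only [getElem_map, getElem_range]
  rw [getD_eq_getElem _ _ (by simpa using h2)]

lemma map_addmod_range (n k : ℕ) :
    (range n).map (fun i => (i + k) % n) = (range n).rotate k := by
  apply List.ext_getElem (by simp)
  intro j h1 h2
  simp only [getElem_map, getElem_range]
  have := List.get_rotate (range n) k ⟨j, h2⟩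
  simp only [get_eq_getElem, getElem_range] at this
  rw [this]
  congr 1
  simp

lemma bwt_perm (v : List A) : bwt v ~ v := by
  rcases eq_or_ne v [] with rfl | hv
  · simp [bwt]
  · have hn : 0 < v.length := length_pos_of_ne_nil hv
    set d := v.getLast hv with hd
    have hsp : Multiset.sort
        (((range v.length).map (fun i => v.rotate i) : List (List A)) : Multiset (List A)) (· ≤ ·) ~
        (range v.length).map (fun i => v.rotate i) :=
      Multiset.coe_eq_coe.mp (Multiset.sort_eq _ _)
    have h1 : bwt v ~ ((range v.length).map (fun i => v.rotate i)).filterMap List.getLast? :=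
      Perm.filterMap _ hsp
    rw [filterMap_getLast?_eq _ (fun l hl => by
      obtain ⟨i, _, rfl⟩ := mem_map.mp hl
      intro hcon
      have hl0 : (v.rotate i).length = 0 := by rw [hcon]; rfl
      rw [length_rotate] at hl0
      exact hv (List.eq_nil_of_length_eq_zero hl0)) d] at h1
    rw [map_map] at h1
    have h2 : ((range v.length).map ((fun l => l.getLastD d) ∘ (fun i => v.rotate i))) =
        (range v.length).map (fun i => v.getD ((i + (v.length - 1)) % v.length) d) :=
      map_congr_left (fun i hi => getLastD_rotate hv d (mem_range.mp hi))
    rw [h2] at h1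
    have h3 : (range v.length).map (fun i => v.getD ((i + (v.length - 1)) % v.length) d) =
        ((range v.length).map (fun i => (i + (v.length - 1)) % v.length)).map
          (fun i => v.getD i d) := by rw [map_map]; rfl
    rw [h3, map_addmod_range] at h1
    calc bwt v ~ ((range v.length).rotate (v.length - 1)).map (fun i => v.getD i d) := h1
      _ ~ (range v.length).map (fun i => v.getD i d) := Perm.map _ (rotate_perm _ _)
      _ = v := map_getD_range v d

lemma sorted_flatten_blocks {r : A → A → Prop} (hrefl : ∀ x, r x x)
    (F : A → List A) (h : A → A) (l : List A)
    (hl : l.Pairwise (fun x y => r (h x) (h y)))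
    (hF : ∀ x ∈ l, ∀ c ∈ F x, c = h x) :
    Pairwise r (l.map F).flatten := by
  induction l with
  | nil => simp
  | cons x t ih =>
    rw [map_cons, flatten_cons]
    rw [pairwise_append]
    obtain ⟨hxt, htt⟩ := pairwise_cons.mp hl
    refine ⟨?_, ih htt (fun y hy => hF y (mem_cons_of_mem _ hy)), ?_⟩
    · apply pairwise_of_forall_mem_list
      intro c hc c' hc'
      rw [hF x mem_cons_self c hc, hF x mem_cons_self c' hc']
      exact hrefl _
    · intro c hc c' hc'
      obtain ⟨ly, hly, hc'y⟩ := mem_flatten.mp hc'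
      obtain ⟨y, hyt, rfl⟩ := mem_map.mp hly
      rw [hF x mem_cons_self c hc, hF y (mem_cons_of_mem _ hyt) c' hc'y]
      exact hxt y hyt

lemma count_flatten_replicate (v : List A) (l : List A) (hn : l.Nodup) (c : A) (hc : c ∈ l) :
    ((l.map (fun y => replicate (v.count y) y)).flatten).count c = v.count c := by
  induction l with
  | nil => simp at hc
  | cons y t ih =>
    rw [map_cons, flatten_cons, count_append]
    rcases nodup_cons.mp hn with ⟨hyt, hnt⟩
    by_cases hyc : y = c
    · subst hyc
      have hct : y ∉ t := hyt
      rw [count_replicate, if_pos (by simp)]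
      have : ((t.map (fun y => replicate (v.count y) y)).flatten).count y = 0 := by
        rw [count_eq_zero]
        intro hmem
        obtain ⟨ly, hly, hcy⟩ := mem_flatten.mp hmem
        obtain ⟨z, hzt, rfl⟩ := mem_map.mp hly
        exact hct (eq_of_mem_replicate hcy ▸ hzt)
      rw [this]
      omega
    · rw [count_replicate, if_neg (by simpa using hyc)]
      have hct : c ∈ t := by
        rcases mem_cons.mp hc with h | h
        · exact absurd h.symm hyc
        · exact h
      rw [ih hnt hct, Nat.zero_add]

theorem exists_clustering_of_sorted {A : Type*} [LinearOrder A] [Fintype A] (v : List A)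
    (ρ : A → ℕ) (hinj : Function.Injective ρ)
    (hsorted : (bwt v).Pairwise (fun x y => ρ x ≤ ρ y)) :
    ∃ π' : Equiv.Perm A, Clustering π' v := by
  set r' : A → A → Prop := fun x y => ρ x ≤ ρ y with hr'
  haveI : DecidableRel r' := fun x y => Nat.decLe _ _
  haveI : IsTrans A r' := ⟨fun _ _ _ h1 h2 => le_trans h1 h2⟩
  haveI : IsAntisymm A r' := ⟨fun x y h1 h2 => hinj (le_antisymm h1 h2)⟩
  haveI : IsTotal A r' := ⟨fun x y => le_total _ _⟩
  set l₁ := Finset.univ.sort (· ≤ · : A → A → Prop) with hl₁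
  set l₂ := Finset.univ.sort r' with hl₂
  have hlen : l₁.length = l₂.length := by
    rw [hl₁, hl₂, Finset.length_sort, Finset.length_sort]
  have hmem1 : ∀ x : A, x ∈ l₁ := fun x => (Finset.mem_sort _).mpr (Finset.mem_univ x)
  have hmem2 : ∀ x : A, x ∈ l₂ := fun x => (Finset.mem_sort _).mpr (Finset.mem_univ x)
  set f₁ := List.Nodup.getEquivOfForallMemList l₁ (Finset.sort_nodup _ _) hmem1 with hf₁
  set f₂ := List.Nodup.getEquivOfForallMemList l₂ (Finset.sort_nodup _ _) hmem2 with hf₂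
  refine ⟨f₁.symm.trans ((finCongr hlen).trans f₂), ?_⟩
  set π' := f₁.symm.trans ((finCongr hlen).trans f₂) with hπ'
  have hmap : l₁.map π' = l₂ := by
    apply List.ext_getElem (by simpa using hlen)
    intro j h1 h2
    rw [getElem_map]
    have hj1 : j < l₁.length := by simpa using h1
    have : l₁[j] = f₁ ⟨j, hj1⟩ := by simp [hf₁, List.Nodup.getEquivOfForallMemList]
    rw [this, hπ']
    simp only [Equiv.trans_apply, Equiv.symm_apply_apply, finCongr_apply]
    rfl
  show bwt v = _
  have hkey : bwt v = (l₂.map (fun y => replicate (v.count y) y)).flatten := by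
    apply (fun hp h1 h2 => List.Perm.eq_of_pairwise' (r := r') h1 h2 hp)
    · refine (bwt_perm v).trans ?_
      rw [perm_iff_count]
      intro c
      rw [count_flatten_replicate v l₂ (Finset.sort_nodup _ _) c (hmem2 c)]
    · exact hsorted
    · exact sorted_flatten_blocks (r := r') (fun x => le_refl _) _ id l₂
        (Finset.pairwise_sort _ r') (fun x _ c hc => eq_of_mem_replicate hc)
  rw [hkey]
  have : (fun x => replicate (v.count (π' x)) (π' x)) =
      (fun y => replicate (v.count y) y) ∘ π' := rfl
  rw [this, ← map_map, hmap]

end Aux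
section Main

open List

lemma rot_le_rot_of_clustering {A : Type*} [LinearOrder A] [Fintype A] (π : Equiv.Perm A)
    (w : List A) (hc : Clustering π w) {a b : A} (hab : a ≠ b) (hπ : π.symm a < π.symm b)
    {ρ₁ ρ₂ : List A}
    (h₁ : ρ₁ ∈ (range w.length).map (fun i => w.rotate i))
    (h₂ : ρ₂ ∈ (range w.length).map (fun i => w.rotate i))
    (hl₁ : ρ₁.getLastD b = a) (hl₂ : ρ₂.getLastD b = b) : ρ₁ ≤ ρ₂ := by
  have hw : w ≠ [] := by
    rintro rfl; simp at h₁
  set Rl : List (List A) := (range w.length).map (fun i => w.rotate i) with hRl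
  set R : List (List A) := Multiset.sort (↑Rl) (· ≤ ·) with hRdef
  have hRperm : R ~ Rl := Multiset.coe_eq_coe.mp (Multiset.sort_eq _ _)
  have hnonnil : ∀ l ∈ R, l ≠ [] := by
    intro l hl
    obtain ⟨i, _, rfl⟩ := mem_map.mp (hRperm.mem_iff.mp hl)
    intro hcon
    have h0 : (w.rotate i).length = 0 := by rw [hcon]; rfl
    rw [length_rotate] at h0
    exact hw (List.eq_nil_of_length_eq_zero h0)
  have hbwt : bwt w = R.map (fun l => l.getLastD b) := by
    have h0 : bwt w = R.filterMap List.getLast? := rfl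
    rw [h0, filterMap_getLast?_eq _ hnonnil b]
  obtain ⟨p, hp, hRp⟩ := getElem_of_mem (hRperm.mem_iff.mpr h₁)
  obtain ⟨q, hq, hRq⟩ := getElem_of_mem (hRperm.mem_iff.mpr h₂)
  have hsorted : Pairwise (· ≤ ·) R := Multiset.pairwise_sort _ _
  rcases lt_trichotomy p q with hpq | hpq | hpq
  · have hle := hsorted.rel_get_of_lt (a := ⟨p, hp⟩) (b := ⟨q, hq⟩) (by exact hpq)
    rw [get_eq_getElem, get_eq_getElem] at hle
    simp only [hRp, hRq] at hle
    exact hle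
  · subst hpq
    exact le_of_eq (hRp.symm.trans hRq)
  · exfalso
    set l₁ := Finset.univ.sort (· ≤ · : A → A → Prop) with hl₁def
    set g : A → List A := fun x => List.replicate (w.count (π x)) (π x) with hg
    have hF : bwt w = (l₁.map g).flatten := hc
    have hmemsa : π.symm a ∈ l₁ := by
      rw [hl₁def]
      exact (Finset.mem_sort (· ≤ · : A → A → Prop)).mpr (Finset.mem_univ _)
    obtain ⟨L, L', hsplit⟩ := append_of_mem hmemsa
    set P : List A := (L.map g).flatten ++ List.replicate (w.count a) a with hP
    set Q : List A := (L'.map g).flatten with hQ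
    have hFPQ : (l₁.map g).flatten = P ++ Q := by
      rw [hsplit, map_append, flatten_append, map_cons, flatten_cons, hP, hQ, hg]
      simp only [Equiv.apply_symm_apply]
      rw [append_assoc]
    have hsort_lt : Pairwise (· < ·) l₁ := (Finset.sortedLT_sort _).pairwise
    have hnd : l₁.Nodup := Finset.sort_nodup _ _
    have hLlt : ∀ x ∈ L, x < π.symm a := by
      rw [hsplit] at hsort_lt
      have hcross := (pairwise_append.mp hsort_lt).2.2
      intro x hx
      exact hcross x hx (π.symm a) mem_cons_self
    have hnotL' : π.symm a ∉ L' := by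
      rw [hsplit] at hnd
      exact (nodup_cons.mp (nodup_append.mp hnd).2.1).1
    have haQ : a ∉ Q := by
      intro hmem
      obtain ⟨ly, hly, hay⟩ := mem_flatten.mp hmem
      obtain ⟨y, hyL', rfl⟩ := mem_map.mp hly
      have hya : y = π.symm a :=
        (Equiv.apply_eq_iff_eq_symm_apply π).mp (eq_of_mem_replicate hay).symm
      exact hnotL' (hya ▸ hyL')
    have hbP : b ∉ P := by
      intro hmem
      rcases mem_append.mp hmem with hm | hm
      · obtain ⟨ly, hly, hby⟩ := mem_flatten.mp hm
        obtain ⟨y, hyL, rfl⟩ := mem_map.mp hly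
        have hyb : y = π.symm b :=
          (Equiv.apply_eq_iff_eq_symm_apply π).mp (eq_of_mem_replicate hby).symm
        have hlt := hLlt y hyL
        rw [hyb] at hlt
        exact absurd hπ (not_lt_of_gt hlt)
      · exact hab (eq_of_mem_replicate hm).symm
    have hbwtF : bwt w = P ++ Q := hF.trans hFPQ
    have hlenR : (bwt w).length = R.length := by rw [hbwt, length_map]
    have hp' : p < (bwt w).length := by rw [hlenR]; exact hp
    have hq' : q < (bwt w).length := by rw [hlenR]; exact hq
    have hFp : (bwt w)[p]'hp' = a := by
      rw [List.getElem_of_eq hbwt hp', getElem_map, hRp]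
      exact hl₁
    have hFq : (bwt w)[q]'hq' = b := by
      rw [List.getElem_of_eq hbwt hq', getElem_map, hRq]
      exact hl₂
    have hp2 : p < (P ++ Q).length := by rw [← hbwtF]; exact hp'
    have hq2 : q < (P ++ Q).length := by rw [← hbwtF]; exact hq'
    have hFp2 : (P ++ Q)[p]'hp2 = a := by rw [← List.getElem_of_eq hbwtF hp']; exact hFp
    have hFq2 : (P ++ Q)[q]'hq2 = b := by rw [← List.getElem_of_eq hbwtF hq']; exact hFq
    have hpP : p < P.length := by
      by_contra hge
      push_neg at hge
      rw [List.getElem_append_right hge] at hFp2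
      exact haQ (hFp2 ▸ List.getElem_mem _)
    have hqP : q < P.length := lt_trans hpq hpP
    rw [List.getElem_append_left hqP] at hFq2
    exact hbP (hFq2 ▸ List.getElem_mem _)

lemma bwt_af {A : Type*} [LinearOrder A] {a b : A} (w : List A) (hw : w ≠ []) (hab : a ≠ b)
    (hb : ∀ c : A, b ≤ c)
    (hC : ∀ ρ₁ ρ₂ : List A, ρ₁ ∈ (range w.length).map (fun i => w.rotate i) →
      ρ₂ ∈ (range w.length).map (fun i => w.rotate i) →
      ρ₁.getLastD b = a → ρ₂.getLastD b = b → ρ₁ ≤ ρ₂) :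
    ∃ E : ℕ, bwt (af a b w) = replicate E a ++ (bwt w).map (sg a b) := by
  have hn : 0 < w.length := length_pos_of_ne_nil hw
  set Rl : List (List A) := (range w.length).map (fun i => w.rotate i) with hRl
  set RotA : List (List A) :=
    (range (af a b w).length).map (fun i => (af a b w).rotate i) with hRotA
  set exts : List (List A) :=
    ((range w.length).filter (fun s => decide (w.getD s a = a))).map
      (fun s => b :: (af a b (w.drop (s + 1) ++ w.take s) ++ [a])) with hexts
  have hrotmem : ∀ t : ℕ, w.rotate t ∈ Rl := by
    intro t
    rw [hRl, mem_map]
    exact ⟨t % w.length, mem_range.mpr (Nat.mod_lt _ hn), rotate_mod w t⟩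
  have hRlnonnil : ∀ l ∈ Rl, l ≠ [] ∧ l.length = w.length := by
    intro l hl
    obtain ⟨i, _, rfl⟩ := mem_map.mp hl
    refine ⟨fun hcon => ?_, length_rotate w i⟩
    have h0 : (w.rotate i).length = 0 := by rw [hcon]; rfl
    rw [length_rotate] at h0
    exact hw (List.eq_nil_of_length_eq_zero h0)
  have hdec : RotA ~ (Rl.map (af a b)) ++ exts := by
    have h0 := rotations_decomp (a := a) (b := b) w
    rw [hRotA, hRl, hexts, map_map]
    exact h0
  set R : List (List A) := Multiset.sort (↑Rl) (· ≤ ·) with hRdef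
  have hRperm : R ~ Rl := Multiset.coe_eq_coe.mp (Multiset.sort_eq _ _)
  set E : List (List A) := Multiset.sort (↑exts) (· ≤ ·) with hEdef
  have hEperm : E ~ exts := Multiset.coe_eq_coe.mp (Multiset.sort_eq _ _)
  set Lc : List (List A) := E ++ R.map (af a b) with hLcdef
  have hperm : Lc ~ RotA := by
    calc Lc ~ exts ++ R.map (af a b) := Perm.append_right _ hEperm
      _ ~ exts ++ Rl.map (af a b) := Perm.append_left _ (Perm.map _ hRperm)
      _ ~ (Rl.map (af a b)) ++ exts := perm_append_comm
      _ ~ RotA := hdec.symm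
  have hEmem : ∀ e ∈ E, ∃ s, s < w.length ∧ w.getD s a = a ∧
      e = b :: (af a b (w.drop (s + 1) ++ w.take s) ++ [a]) := by
    intro e he
    obtain ⟨s, hs, rfl⟩ := mem_map.mp (hEperm.mem_iff.mp he)
    have hs' := mem_filter.mp hs
    exact ⟨s, mem_range.mp hs'.1, of_decide_eq_true hs'.2, rfl⟩
  have hsortE : Pairwise (· ≤ ·) E := Multiset.pairwise_sort _ _
  have hsortR : Pairwise (· ≤ ·) R := Multiset.pairwise_sort _ _
  have hsortmapR : Pairwise (· ≤ ·) (R.map (af a b)) := by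
    rw [pairwise_map]
    refine hsortR.imp_of_mem (fun {x y} hx hy hxy => ?_)
    have hlx := (hRlnonnil x (hRperm.mem_iff.mp hx)).2
    have hly := (hRlnonnil y (hRperm.mem_iff.mp hy)).2
    exact (af_le_af_iff (hlx.trans hly.symm)).mp hxy
  have hcross : ∀ e ∈ E, ∀ x ∈ R.map (af a b), e ≤ x := by
    intro e he x hx
    obtain ⟨r, hr, rfl⟩ := mem_map.mp hx
    obtain ⟨s, hs, hsa, rfl⟩ := hEmem e he
    obtain ⟨j, _, hj⟩ := mem_map.mp (hRperm.mem_iff.mp hr)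
    have hrprop := hRlnonnil r (hRperm.mem_iff.mp hr)
    obtain ⟨c, t, hct⟩ := exists_cons_of_ne_nil hrprop.1
    set u : List A := w.drop (s + 1) ++ w.take s with hu
    have hws : w[s] = a := by rw [← getD_eq_getElem _ a hs]; exact hsa
    have hrots : w.rotate s = a :: u := by
      rw [rotate_eq_drop_append_take (le_of_lt hs), ← List.getElem_cons_drop hs, hws,
        cons_append]
    rcases (hb c).lt_or_eq with hbc | hbc
    · have hlt : (b :: (af a b u ++ [a])) < af a b (c :: t) := by
        rw [af_head]
        exact List.Lex.rel hbc
      rw [← hct] at hlt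
      exact le_of_lt hlt
    · subst hct
      subst hbc
      -- r = b :: t
      have hba : ¬ (b = a) := fun h => hab h.symm
      rw [af_head, if_neg hba, cons_le_cons_iff']
      set X : List A := af a b u ++ [a] with hX
      set Y : List A := af a b t with hY
      have hlen_t : t.length + 1 = w.length := by
        have := hrprop.2
        simpa using this
      have hlen_u : u.length + 1 = w.length := by
        have h0 := congrArg List.length hrots
        rw [length_rotate] at h0
        simpa using h0.symm
      have hcount_u : u.count a + 1 = w.count a := by
        have h0 := (rotate_perm w s).count_eq a
        rw [hrots] at h0
        rw [count_cons] at h0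
        simp at h0
        omega
      have hcount_t : t.count a = w.count a := by
        have h0 := (rotate_perm w j).count_eq a
        rw [hj] at h0
        rw [count_cons, if_neg (by simpa using hba)] at h0
        simpa using h0
      have hlenXY : X.length = Y.length := by
        have e1 : X.length = (u.length + u.count a) + 1 := by
          rw [hX, length_append, length_af]
          simp
        have e2 : Y.length = t.length + t.count a := by
          rw [hY, length_af]
        omega
      have htne : t ≠ [] := by
        intro h0
        rw [h0] at hlen_t
        simp only [length_nil, Nat.zero_add] at hlen_t
        have hu0 : u = [] := by
          apply List.eq_nil_of_length_eq_zero
          omega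
        rw [h0] at hcount_t
        rw [hu0] at hcount_u
        simp only [count_nil] at hcount_t hcount_u
        omega
      have hne : X ≠ Y := by
        intro h0
        have hX' : X.getLastD b = a := by rw [hX]; exact getLastD_concat
        have hY' : Y.getLastD b ≠ a := by
          rw [hY, getLastD_af htne]
          exact sg_ne_a hab _
        rw [h0] at hX'
        exact hY' hX'
      have hXY : X < Y := by
        by_contra hnot
        have hYX : Y < X := lt_of_le_of_ne (not_lt.mp hnot) hne.symm
        have h1 : Y ++ [b] < X ++ [b] :=
          (append_lt_append_of_ne hlenXY.symm hne.symm [b] [b]).mpr hYX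
        have hXb : X ++ [b] = af a b (u ++ [a]) := by
          rw [af_append, af_singleton, mr, if_pos rfl, hX, append_assoc]
          rfl
        have hYb : Y ++ [b] = af a b (t ++ [b]) := by
          rw [af_append, af_singleton, mr, if_neg hba, hY]
        rw [hXb, hYb] at h1
        have hlen2 : (t ++ [b]).length = (u ++ [a]).length := by
          simp only [length_append, length_cons, length_nil]
          omega
        have h2 : t ++ [b] < u ++ [a] := (af_lt_af_iff hlen2).mpr h1
        have hmem_ua : u ++ [a] ∈ Rl := by
          have h3 : (w.rotate s).rotate 1 = u ++ [a] := by
            rw [hrots]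
            rw [show (1 : ℕ) = 0 + 1 from rfl, rotate_cons_succ, rotate_zero]
          rw [rotate_rotate] at h3
          rw [← h3]
          exact hrotmem _
        have hmem_tb : t ++ [b] ∈ Rl := by
          have h3 : (w.rotate j).rotate 1 = t ++ [b] := by
            rw [hj]
            rw [show (1 : ℕ) = 0 + 1 from rfl, rotate_cons_succ, rotate_zero]
          rw [rotate_rotate] at h3
          rw [← h3]
          exact hrotmem _
        have hCle : u ++ [a] ≤ t ++ [b] :=
          hC _ _ hmem_ua hmem_tb getLastD_concat getLastD_concat
        exact absurd (lt_of_le_of_lt hCle h2) (lt_irrefl _)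
      exact le_of_lt hXY
  have hsortLc : Pairwise (· ≤ ·) Lc := by
    rw [hLcdef]
    exact pairwise_append.mpr ⟨hsortE, hsortmapR, hcross⟩
  have hsorteq : Multiset.sort (↑RotA : Multiset (List A)) (· ≤ ·) = Lc :=
    List.Perm.eq_of_pairwise' (Multiset.pairwise_sort _ _) hsortLc
      ((Multiset.coe_eq_coe.mp (Multiset.sort_eq _ _)).trans hperm.symm)
  have hnonnilLc : ∀ l ∈ Lc, l ≠ [] := by
    intro l hl
    rcases mem_append.mp hl with hm | hm
    · obtain ⟨s, _, _, rfl⟩ := hEmem l hm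
      simp
    · obtain ⟨r, hr, rfl⟩ := mem_map.mp hm
      exact af_ne_nil (hRlnonnil r (hRperm.mem_iff.mp hr)).1
  have hbwtaf : bwt (af a b w) = Lc.map (fun l => l.getLastD b) := by
    have h0 : bwt (af a b w) =
        (Multiset.sort (↑RotA : Multiset (List A)) (· ≤ ·)).filterMap List.getLast? := rfl
    rw [h0, hsorteq, filterMap_getLast?_eq _ hnonnilLc b]
  refine ⟨E.length, ?_⟩
  rw [hbwtaf, hLcdef, map_append]
  congr 1
  · rw [eq_replicate_iff]
    refine ⟨by rw [length_map], ?_⟩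
    intro x hx
    obtain ⟨e, he, rfl⟩ := mem_map.mp hx
    obtain ⟨s, _, _, rfl⟩ := hEmem e he
    rw [show (b :: (af a b (w.drop (s + 1) ++ w.take s) ++ [a])) =
      (b :: af a b (w.drop (s + 1) ++ w.take s)) ++ [a] from rfl, getLastD_concat]
  · have hbwtw : bwt w = R.map (fun l => l.getLastD b) := by
      have h0 : bwt w = R.filterMap List.getLast? := rfl
      rw [h0, filterMap_getLast?_eq _ (fun l hl => (hRlnonnil l (hRperm.mem_iff.mp hl)).1) b]
    rw [hbwtw, map_map, map_map]
    apply map_congr_left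
    intro r hr
    exact getLastD_af (hRlnonnil r (hRperm.mem_iff.mp hr)).1 b

end Main
open List in
/-- If `w` is primitive and `π`-clustering, `b` is the smallest letter of the alphabet, and
`π⁻¹(b)` is the immediate successor of `π⁻¹(a)` in the alphabet order, then `α_{a,b}(w)` is
`π'`-clustering for some permutation `π'` of the same alphabet. -/
theorem clustering_alpha_bottom {A : Type*} [LinearOrder A] [Fintype A] (w : List A)
    (hw : Primitive w) (π : Equiv.Perm A) (hc : Clustering π w) (a b : A)
    (hb : ∀ c : A, b ≤ c) (hcov : π.symm a ⋖ π.symm b) :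
    ∃ π' : Equiv.Perm A,
      Clustering π' (w.flatMap fun c => if c = a then [a, b] else [c]) := by
  have hgoal : (w.flatMap fun c => if c = a then [a, b] else [c]) = af a b w := rfl
  rw [hgoal]
  rcases eq_or_ne w [] with rfl | hwne
  · refine ⟨π, ?_⟩
    simp only [Clustering, af_nil]
    have h0 : bwt ([] : List A) = [] := by simp [bwt]
    rw [h0]
    simp
  · have hπlt : π.symm a < π.symm b := hcov.1
    have hab : a ≠ b := by
      intro h; rw [h] at hπlt; exact lt_irrefl _ hπlt
    have hC : ∀ ρ₁ ρ₂ : List A, ρ₁ ∈ (range w.length).map (fun i => w.rotate i) →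
        ρ₂ ∈ (range w.length).map (fun i => w.rotate i) →
        ρ₁.getLastD b = a → ρ₂.getLastD b = b → ρ₁ ≤ ρ₂ :=
      fun ρ₁ ρ₂ h₁ h₂ hl₁ hl₂ => rot_le_rot_of_clustering π w hc hab hπlt h₁ h₂ hl₁ hl₂
    obtain ⟨E, hT1⟩ := bwt_af w hwne hab hb hC
    set rnk : A → ℕ := fun x => ((Finset.univ : Finset A).filter (fun z => z < x)).card with hrnk
    have hrnkmono : ∀ {x y : A}, x < y → rnk x < rnk y := by
      intro x y hxy
      apply Finset.card_lt_card
      rw [Finset.ssubset_iff_of_subset]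
      · exact ⟨x, by simp [hxy], by simp⟩
      · intro z hz
        simp only [Finset.mem_filter, Finset.mem_univ, true_and] at hz ⊢
        exact lt_trans hz hxy
    have hrnkle : ∀ {x y : A}, x ≤ y → rnk x ≤ rnk y := by
      intro x y hxy
      rcases hxy.lt_or_eq with h | h
      · exact le_of_lt (hrnkmono h)
      · rw [h]
    set ρ : A → ℕ := fun x => if x = a then 0 else rnk (π.symm x) + 1 with hρ
    have hρinj : Function.Injective ρ := by
      intro x y hxy
      by_cases hx : x = a <;> by_cases hy : y = a
      · rw [hx, hy]
      · rw [hρ] at hxy; simp only [if_pos hx, if_neg hy] at hxy; omega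
      · rw [hρ] at hxy; simp only [if_neg hx, if_pos hy] at hxy; omega
      · rw [hρ] at hxy
        simp only [if_neg hx, if_neg hy, Nat.add_right_cancel_iff] at hxy
        have heq : π.symm x = π.symm y := by
          by_contra hne
          rcases lt_or_gt_of_ne hne with h | h
          · exact absurd hxy (Nat.ne_of_lt (hrnkmono h))
          · exact absurd hxy.symm (Nat.ne_of_lt (hrnkmono h))
        exact π.symm.injective heq
    have hρa : ρ a = 0 := by rw [hρ]; simp
    have hρb : ρ b = rnk (π.symm b) + 1 := by
      rw [hρ]
      simp only [if_neg (fun h => hab h.symm : ¬ (b = a))]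
    have hval : ∀ z : A, ρ (sg a b (π z)) =
        if z = π.symm a then rnk (π.symm b) + 1 else rnk z + 1 := by
      intro z
      by_cases hz : z = π.symm a
      · rw [if_pos hz, hz, sg, Equiv.apply_symm_apply, if_pos rfl, hρb]
      · have hπz : π z ≠ a := fun h => hz ((Equiv.apply_eq_iff_eq_symm_apply π).mp h)
        rw [if_neg hz, sg, if_neg hπz, hρ]
        simp only [if_neg hπz, Equiv.symm_apply_apply]
    have hkey : ∀ x y : A, x < y → ρ (sg a b (π x)) ≤ ρ (sg a b (π y)) := by
      intro x y hxy
      rw [hval x, hval y]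
      by_cases hx : x = π.symm a
      · have hy : y ≠ π.symm a := by
          intro h
          rw [hx] at hxy
          rw [h] at hxy
          exact lt_irrefl _ hxy
        rw [if_pos hx, if_neg hy]
        have hlt : π.symm a < y := by rw [← hx]; exact hxy
        have hle : π.symm b ≤ y := not_lt.mp (hcov.2 hlt)
        exact Nat.succ_le_succ (hrnkle hle)
      · by_cases hy : y = π.symm a
        · rw [if_neg hx, if_pos hy]
          have h1 : x < π.symm a := by rw [← hy]; exact hxy
          exact Nat.succ_le_succ (hrnkle (le_of_lt (lt_trans h1 hπlt)))
        · rw [if_neg hx, if_neg hy]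
          exact Nat.succ_le_succ (le_of_lt (hrnkmono hxy))
    have hsorted : (bwt (af a b w)).Pairwise (fun x y => ρ x ≤ ρ y) := by
      rw [hT1, hc, map_flatten, map_map]
      have hfun : ((map (sg a b)) ∘ (fun x => List.replicate (w.count (π x)) (π x))) =
          fun x => List.replicate (w.count (π x)) (sg a b (π x)) := by
        funext x
        simp [map_replicate]
      rw [hfun]
      apply pairwise_append.mpr
      refine ⟨?_, ?_, ?_⟩
      · apply pairwise_of_forall_mem_list
        intro x hx y hy
        rw [eq_of_mem_replicate hx, eq_of_mem_replicate hy]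
      · exact sorted_flatten_blocks (r := fun x y => ρ x ≤ ρ y) (fun x => le_refl _)
          _ (fun x => sg a b (π x)) _
          ((Finset.sortedLT_sort _).pairwise.imp (fun {x y} h => hkey x y h))
          (fun x _ c hc' => eq_of_mem_replicate hc')
      · intro x hx y hy
        rw [eq_of_mem_replicate hx, hρa]
        exact Nat.zero_le _
    exact exists_clustering_of_sorted (af a b w) ρ hρinj hsorted
end

section
/- Let w be a primitive word over the ordered alphabet A = {a_1 < … < a_k} which is π-clustering for a permutation π of A, let a ∈ A, and let b be a letter not in A. Then there exists a permutation π' of A' = {a_1 < … < a_k < b} such that α_{a,b}(w), viewed as a word over A', is π'-clustering for A'; and there exists a permutation π'' of A'' = {b < a_1 < … < a_k} such that α_{a,b}(w), viewed as a word over A'', is π''-clustering for A''. Here α_{a,b} is the monoid morphism sending a to ab and fixing all other letters. -/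
instance {A : Type*} [Fintype A] : Fintype (WithTop A) :=
  inferInstanceAs (Fintype (Option A))

instance {A : Type*} [Fintype A] : Fintype (WithBot A) :=
  inferInstanceAs (Fintype (Option A))

namespace BWTAux

section Core
variable {A : Type*} {A' : Type*} [DecidableEq A] (e : A → A') (t : A') (a : A)

/-- The image of a letter under the morphism `α_{a,b}` (with `b = t`). -/
def fm (c : A) : List A' := if c = a then [e a, t] else [e c]

/-- The morphism `α_{a,b}` on words. -/
def al (w : List A) : List A' := w.flatMap (fm e t a)

lemma al_append (u v : List A) : al e t a (u ++ v) = al e t a u ++ al e t a v :=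
  List.flatMap_append

lemma al_cons (c : A) (v : List A) :
    al e t a (c :: v) = e c :: ((if c = a then [t] else []) ++ al e t a v) := by
  by_cases h : c = a <;> simp [al, fm, h]

lemma rot_boundary (u v : List A) :
    (al e t a (u ++ v)).rotate (al e t a u).length = al e t a (v ++ u) := by
  rw [al_append, al_append, List.rotate_eq_drop_append_take (by simp),
    List.drop_left, List.take_left]

lemma rot_mid (u v : List A) :
    (al e t a (u ++ a :: v)).rotate ((al e t a u).length + 1)
      = (al e t a (a :: (v ++ u))).rotate 1 := by
  have h1 : al e t a (u ++ a :: v) = al e t a u ++ ([e a, t] ++ al e t a v) := by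
    rw [al_append, al_cons, if_pos rfl]; rfl
  have h2 : al e t a (a :: (v ++ u)) = [e a, t] ++ (al e t a v ++ al e t a u) := by
    rw [al_cons, if_pos rfl, al_append]; rfl
  rw [h1, h2, List.rotate_eq_drop_append_take (by simp),
    List.rotate_eq_drop_append_take (by simp)]
  rw [List.drop_append, List.take_append]
  simp [List.drop_eq_nil_of_le, List.take_of_length_le]

/-- `(start, length)` pairs for the blocks of a flatMap. -/
def offs : ℕ → List ℕ → List (ℕ × ℕ)
  | _, [] => []
  | s, x :: xs => (s, x) :: offs (s + x) xs

lemma offs_flat : ∀ (l : List ℕ) (s : ℕ),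
    (offs s l).flatMap (fun p => List.range' p.1 p.2) = List.range' s l.sum := by
  intro l
  induction l with
  | nil => intro s; simp [offs]
  | cons x xs ih =>
    intro s
    rw [offs, List.flatMap_cons, ih (s + x), List.sum_cons]
    have := List.range'_append (s := s) (m := x) (n := xs.sum) (step := 1)
    simp only [one_mul, Nat.add_comm xs.sum x] at this ⊢
    rw [← this]

/-- Rotations of `al w` grouped by blocks, as a list. -/
def parts (w : List A) : ℕ → List A → List (List A')
  | _, [] => []
  | i, c :: v =>
    (if c = a then [al e t a (w.rotate i), (al e t a (w.rotate i)).rotate 1]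
      else [al e t a (w.rotate i)]) ++ parts w (i + 1) v

/-- The "new" rotations, starting at the inserted letter `t`. -/
def mids (w : List A) : ℕ → List A → List (List A')
  | _, [] => []
  | i, c :: v =>
    (if c = a then [(al e t a (w.rotate i)).rotate 1] else []) ++ mids w (i + 1) v

lemma rotate_of_append (w u v : List A) (h : w = u ++ v) :
    w.rotate u.length = v ++ u := by
  subst h
  rw [List.rotate_eq_drop_append_take (by simp), List.drop_left, List.take_left]

lemma key (w : List A) : ∀ (v u : List A), w = u ++ v →
    (offs (al e t a u).length (v.map fun c => (fm e t a c).length)).flatMap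
        (fun p => (List.range' p.1 p.2).map ((al e t a w).rotate ·))
      = parts e t a w u.length v := by
  intro v
  induction v with
  | nil => intro u h; simp [offs, parts]
  | cons c v ih =>
    intro u h
    have hrotu : w.rotate u.length = (c :: v) ++ u := rotate_of_append w u (c :: v) h
    have hrec : (al e t a (u ++ [c])).length = (al e t a u).length + (fm e t a c).length := by
      rw [al_append]; simp [al]
    have hlen : ((u ++ [c]).length : ℕ) = u.length + 1 := by simp
    have hkey := ih (u ++ [c]) (by simp [h])
    rw [hrec, hlen] at hkey
    by_cases hc : c = a
    · rw [hc] at h hrotu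
      have hfm : (fm e t a c).length = 2 := by simp [fm, hc]
      rw [hfm] at hkey
      rw [List.map_cons, hfm, offs, List.flatMap_cons, hkey, parts, if_pos hc]
      congr 1
      have h2 : List.range' (al e t a u).length 2
          = [(al e t a u).length, (al e t a u).length + 1] := by
        simp [List.range'_succ]
      rw [h2, List.map_cons, List.map_cons, List.map_nil]
      congr 1
      · rw [hrotu, h, rot_boundary]
      · rw [hrotu, h, rot_mid]; rfl
    · have hfm : (fm e t a c).length = 1 := by simp [fm, hc]
      rw [hfm] at hkey
      rw [List.map_cons, hfm, offs, List.flatMap_cons, hkey, parts, if_neg hc]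
      congr 1
      rw [List.range'_one, List.map_cons, List.map_nil]
      congr 1
      rw [hrotu, h, rot_boundary]

lemma rotations_eq (w : List A) :
    (List.range (al e t a w).length).map ((al e t a w).rotate ·) = parts e t a w 0 w := by
  have hlen : (al e t a w).length = (w.map fun c => (fm e t a c).length).sum := by
    rw [al, List.length_flatMap]
  rw [List.range_eq_range', hlen, ← offs_flat, List.map_flatMap]
  have := key e t a w w [] (by simp)
  simpa [al] using this

lemma parts_perm (w : List A) : ∀ (v : List A) (i : ℕ),
    (parts e t a w i v).Perm
      (((List.range' i v.length).map fun j => al e t a (w.rotate j)) ++ mids e t a w i v) := by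
  intro v
  induction v with
  | nil => intro i; simp [parts, mids]
  | cons c v ih =>
    intro i
    rw [parts, mids]
    by_cases hc : c = a
    · rw [if_pos hc, if_pos hc]
      refine List.Perm.trans ((ih (i+1)).append_left _) ?_
      have : List.Perm
          ((al e t a (w.rotate i)).rotate 1 ::
            (((List.range' (i+1) v.length).map fun j => al e t a (w.rotate j)) ++ mids e t a w (i+1) v))
          (((List.range' (i+1) v.length).map fun j => al e t a (w.rotate j)) ++
            ((al e t a (w.rotate i)).rotate 1 :: mids e t a w (i+1) v)) := List.perm_middle.symm
      refine List.Perm.trans (List.Perm.cons _ this) ?_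
      rw [List.length_cons, List.range'_succ, List.map_cons]
      simp
    · rw [if_neg hc, if_neg hc]
      refine List.Perm.trans ((ih (i+1)).append_left _) ?_
      rw [List.length_cons, List.range'_succ, List.map_cons]
      simp

lemma mids_mem (w : List A) : ∀ (v u : List A), w = u ++ v →
    ∀ x ∈ mids e t a w u.length v, ∃ s : List A', x = t :: (s ++ [e a]) := by
  intro v
  induction v with
  | nil => intro u h x hx; simp [mids] at hx
  | cons c v ih =>
    intro u h x hx
    rw [mids] at hx
    have hih := ih (u ++ [c]) (by simp [h])
    rw [List.length_append, List.length_singleton] at hih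
    rcases List.mem_append.1 hx with hx | hx
    · by_cases hc : c = a
      · rw [if_pos hc] at hx
        rcases List.mem_singleton.1 hx with rfl
        have hrotu : w.rotate u.length = c :: (v ++ u) := by
          rw [rotate_of_append w u (c :: v) h]; rfl
        rw [hrotu, al_cons, if_pos hc, hc]
        refine ⟨al e t a (v ++ u), ?_⟩
        rw [List.rotate_eq_drop_append_take (by simp)]
        simp [al_append]
      · rw [if_neg hc] at hx; simp at hx
    · exact hih x hx

lemma mids_length (w : List A) : ∀ (v : List A) (i : ℕ),
    (mids e t a w i v).length = v.count a := by
  intro v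
  induction v with
  | nil => intro i; simp [mids]
  | cons c v ih =>
    intro i
    rw [mids, List.length_append, ih (i+1), List.count_cons]
    by_cases hc : c = a <;> simp [hc, Nat.add_comm]


lemma lex_append_left {B : Type*} {r : B → B → Prop} (p : List B) {s u : List B}
    (h : List.Lex r s u) : List.Lex r (p ++ s) (p ++ u) := by
  induction p with
  | nil => exact h
  | cons x p ih => exact List.Lex.cons ih

section Ord
variable [LinearOrder A] [LinearOrder A']

lemma al_lex (he : StrictMono e) : ∀ {u v : List A}, u.length = v.length →
    List.Lex (· < ·) u v → List.Lex (· < ·) (al e t a u) (al e t a v) := by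
  intro u v hl h
  induction h with
  | nil => simp at hl
  | @rel x s y u h =>
    rw [al_cons, al_cons]
    exact List.Lex.rel (he h)
  | @cons x s u h ih =>
    rw [al_cons, al_cons]
    refine List.Lex.cons ?_
    have : al e t a s ≠ [] → True := fun _ => trivial
    exact lex_append_left _ (ih (by simpa using hl))

lemma al_le (he : StrictMono e) {u v : List A} (hl : u.length = v.length)
    (h : u ≤ v) : al e t a u ≤ al e t a v := by
  rcases lt_or_eq_of_le h with h | rfl
  · exact le_of_lt (al_lex e t a he hl h)
  · exact le_rfl

end Ord

lemma al_getLast?_concat (s : List A) (c : A) :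
    (al e t a (s ++ [c])).getLast? = some (if c = a then t else e c) := by
  rw [al_append]
  by_cases hc : c = a <;>
    simp [al, fm, hc, List.getLast?_append]

lemma filterMap_getLast?_map_al (S : List (List A)) (hS : ∀ u ∈ S, u ≠ []) :
    (S.map (al e t a)).filterMap List.getLast? =
      (S.filterMap List.getLast?).map (fun x => if x = a then t else e x) := by
  induction S with
  | nil => simp
  | cons u S ih =>
    have hu : u ≠ [] := hS u (List.mem_cons_self)
    rcases List.eq_nil_or_concat u with rfl | ⟨s, c, rfl⟩
    · exact absurd rfl hu
    · rw [List.map_cons, List.filterMap_cons, List.filterMap_cons]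
      rw [List.concat_eq_append] at *
      rw [al_getLast?_concat, List.getLast?_concat]
      simp only [List.map_cons]
      rw [ih (fun v hv => hS v (List.mem_cons_of_mem _ hv))]

lemma filterMap_getLast?_const {B : Type*} (y : B) :
    ∀ (L : List (List B)), (∀ x ∈ L, x.getLast? = some y) →
      L.filterMap List.getLast? = List.replicate L.length y := by
  intro L
  induction L with
  | nil => intro _; simp
  | cons x L ih =>
    intro h
    rw [List.filterMap_cons, h x (List.mem_cons_self), List.length_cons,
      List.replicate_succ, ih (fun v hv => h v (List.mem_cons_of_mem _ hv))]

variable [DecidableEq A']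

lemma al_count_e (he : Function.Injective e) (ht : ∀ x, t ≠ e x) (c : A) :
    ∀ w : List A, (al e t a w).count (e c) = w.count c := by
  have ht' : ∀ x, e x ≠ t := fun x => (ht x).symm
  intro w
  induction w with
  | nil => simp [al]
  | cons d w ih =>
    have hfm : al e t a (d :: w) = fm e t a d ++ al e t a w := rfl
    rw [hfm, List.count_append, ih, List.count_cons]
    by_cases hd : d = a <;> by_cases hcd : c = d <;>
      have hdc : (d = c) ↔ (c = d) := eq_comm <;>
      simp [fm, hd, hcd, hdc, List.count_cons, beq_iff_eq, he.eq_iff, ht, ht'] <;>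
      omega

lemma al_count_t (ht : ∀ x, t ≠ e x) :
    ∀ w : List A, (al e t a w).count t = w.count a := by
  have ht' : ∀ x, e x ≠ t := fun x => (ht x).symm
  intro w
  induction w with
  | nil => simp [al]
  | cons d w ih =>
    have hfm : al e t a (d :: w) = fm e t a d ++ al e t a w := rfl
    rw [hfm, List.count_append, ih, List.count_cons]
    by_cases hd : d = a <;>
      have hda : (d = a) ↔ (a = d) := eq_comm <;>
      simp [fm, hd, List.count_cons, beq_iff_eq, ht, ht'] <;>
      omega


section BWT
variable [LinearOrder A] [LinearOrder A']

lemma sort_rotations_top (he : StrictMono e) (ht : ∀ x : A, e x < t) (w : List A)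
    (hw : w ≠ []) :
    Multiset.sort
        (((List.range (al e t a w).length).map (fun i => (al e t a w).rotate i) :
          List (List A')) : Multiset (List A')) (· ≤ ·)
      = (Multiset.sort
          (((List.range w.length).map (fun i => w.rotate i) : List (List A)) :
            Multiset (List A)) (· ≤ ·)).map (al e t a)
        ++ Multiset.sort ((mids e t a w 0 w : List (List A')) : Multiset (List A')) (· ≤ ·) := by
  set R : List (List A) := (List.range w.length).map (fun i => w.rotate i) with hR
  set S : List (List A) := Multiset.sort (R : Multiset (List A)) (· ≤ ·) with hS
  set M : List (List A') := mids e t a w 0 w with hM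
  set B : List (List A') := Multiset.sort (M : Multiset (List A')) (· ≤ ·) with hB
  have hSR : S.Perm R := Multiset.coe_eq_coe.1 (Multiset.sort_eq _ _)
  have hBM : B.Perm M := Multiset.coe_eq_coe.1 (Multiset.sort_eq _ _)
  have hRlen : ∀ u ∈ R, u.length = w.length := by
    intro u hu
    rcases List.mem_map.1 hu with ⟨i, _, rfl⟩
    exact List.length_rotate w i
  have hSlen : ∀ u ∈ S, u.length = w.length := fun u hu => hRlen u (hSR.mem_iff.1 hu)
  have hSne : ∀ u ∈ S, u ≠ [] := by
    intro u hu h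
    apply hw
    have := hSlen u hu
    rw [h] at this
    exact (List.eq_nil_of_length_eq_zero this.symm)
  have hMform : ∀ x ∈ M, ∃ s : List A', x = t :: (s ++ [e a]) := by
    have := mids_mem e t a w w [] (by simp)
    simpa using this
  have hBform : ∀ x ∈ B, ∃ s : List A', x = t :: (s ++ [e a]) :=
    fun x hx => hMform x (hBM.mem_iff.1 hx)
  have hCsorted : List.Pairwise (· ≤ ·) (S.map (al e t a) ++ B) := by
    rw [List.pairwise_append]
    refine ⟨?_, Multiset.pairwise_sort _ _, ?_⟩
    · rw [List.pairwise_map]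
      exact (Multiset.pairwise_sort _ (· ≤ ·)).imp_of_mem
        (fun {u v} hu hv huv => al_le e t a he (by rw [hSlen u hu, hSlen v hv]) huv)
    · intro x hx y hy
      rcases List.mem_map.1 hx with ⟨u, hu, rfl⟩
      rcases List.exists_cons_of_ne_nil (hSne u hu) with ⟨c, u', rfl⟩
      rcases hBform y hy with ⟨s, rfl⟩
      have hlt : List.Lex (· < ·) (al e t a (c :: u')) (t :: (s ++ [e a])) := by
        rw [al_cons]
        exact List.Lex.rel (ht c)
      exact le_of_lt hlt
  have hperm : ((List.range (al e t a w).length).map (fun i => (al e t a w).rotate i)).Perm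
      (S.map (al e t a) ++ B) := by
    have h1 : (List.range (al e t a w).length).map (fun i => (al e t a w).rotate i)
        = parts e t a w 0 w := rotations_eq e t a w
    have h2 := parts_perm e t a w w 0
    rw [h1]
    refine h2.trans ?_
    have h3 : (List.range' 0 w.length).map (fun j => al e t a (w.rotate j)) = R.map (al e t a) := by
      rw [hR, ← List.range_eq_range', List.map_map]
      rfl
    rw [h3]
    exact List.Perm.append ((hSR.map (al e t a)).symm) hBM.symm
  refine (fun hp => List.Perm.eq_of_pairwise' (Multiset.pairwise_sort _ _) hCsorted hp) ?_
  refine List.Perm.trans ?_ hperm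
  exact Multiset.coe_eq_coe.1 (Multiset.sort_eq _ _)

lemma sort_rotations_bot (he : StrictMono e) (ht : ∀ x : A, t < e x) (w : List A)
    (hw : w ≠ []) :
    Multiset.sort
        (((List.range (al e t a w).length).map (fun i => (al e t a w).rotate i) :
          List (List A')) : Multiset (List A')) (· ≤ ·)
      = Multiset.sort ((mids e t a w 0 w : List (List A')) : Multiset (List A')) (· ≤ ·)
        ++ (Multiset.sort
          (((List.range w.length).map (fun i => w.rotate i) : List (List A)) :
            Multiset (List A)) (· ≤ ·)).map (al e t a) := by
  set R : List (List A) := (List.range w.length).map (fun i => w.rotate i) with hR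
  set S : List (List A) := Multiset.sort (R : Multiset (List A)) (· ≤ ·) with hS
  set M : List (List A') := mids e t a w 0 w with hM
  set B : List (List A') := Multiset.sort (M : Multiset (List A')) (· ≤ ·) with hB
  have hSR : S.Perm R := Multiset.coe_eq_coe.1 (Multiset.sort_eq _ _)
  have hBM : B.Perm M := Multiset.coe_eq_coe.1 (Multiset.sort_eq _ _)
  have hRlen : ∀ u ∈ R, u.length = w.length := by
    intro u hu
    rcases List.mem_map.1 hu with ⟨i, _, rfl⟩
    exact List.length_rotate w i
  have hSlen : ∀ u ∈ S, u.length = w.length := fun u hu => hRlen u (hSR.mem_iff.1 hu)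
  have hSne : ∀ u ∈ S, u ≠ [] := by
    intro u hu h
    apply hw
    have := hSlen u hu
    rw [h] at this
    exact (List.eq_nil_of_length_eq_zero this.symm)
  have hMform : ∀ x ∈ M, ∃ s : List A', x = t :: (s ++ [e a]) := by
    have := mids_mem e t a w w [] (by simp)
    simpa using this
  have hBform : ∀ x ∈ B, ∃ s : List A', x = t :: (s ++ [e a]) :=
    fun x hx => hMform x (hBM.mem_iff.1 hx)
  have hCsorted : List.Pairwise (· ≤ ·) (B ++ S.map (al e t a)) := by
    rw [List.pairwise_append]
    refine ⟨Multiset.pairwise_sort _ _, ?_, ?_⟩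
    · rw [List.pairwise_map]
      exact (Multiset.pairwise_sort _ (· ≤ ·)).imp_of_mem
        (fun {u v} hu hv huv => al_le e t a he (by rw [hSlen u hu, hSlen v hv]) huv)
    · intro x hx y hy
      rcases List.mem_map.1 hy with ⟨u, hu, rfl⟩
      rcases List.exists_cons_of_ne_nil (hSne u hu) with ⟨c, u', rfl⟩
      rcases hBform x hx with ⟨s, rfl⟩
      have hlt : List.Lex (· < ·) (t :: (s ++ [e a])) (al e t a (c :: u')) := by
        rw [al_cons]
        exact List.Lex.rel (ht c)
      exact le_of_lt hlt
  have hperm : ((List.range (al e t a w).length).map (fun i => (al e t a w).rotate i)).Perm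
      (B ++ S.map (al e t a)) := by
    have h1 : (List.range (al e t a w).length).map (fun i => (al e t a w).rotate i)
        = parts e t a w 0 w := rotations_eq e t a w
    have h2 := parts_perm e t a w w 0
    rw [h1]
    refine h2.trans ?_
    have h3 : (List.range' 0 w.length).map (fun j => al e t a (w.rotate j)) = R.map (al e t a) := by
      rw [hR, ← List.range_eq_range', List.map_map]
      rfl
    rw [h3]
    refine List.Perm.trans List.perm_append_comm ?_
    exact List.Perm.append hBM.symm ((hSR.map (al e t a)).symm)
  refine (fun hp => List.Perm.eq_of_pairwise' (Multiset.pairwise_sort _ _) hCsorted hp) ?_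
  refine List.Perm.trans ?_ hperm
  exact Multiset.coe_eq_coe.1 (Multiset.sort_eq _ _)



lemma sort_mem_ne_nil (w : List A) (hw : w ≠ []) :
    ∀ u ∈ Multiset.sort
      (((List.range w.length).map (fun i => w.rotate i) : List (List A)) : Multiset (List A)) (· ≤ ·),
      u ≠ [] := by
  intro u hu h
  have hu' : u ∈ (List.range w.length).map (fun i => w.rotate i) :=
    (Multiset.coe_eq_coe.1 (Multiset.sort_eq _ _) :
      (Multiset.sort _ (· ≤ ·)).Perm _).mem_iff.1 hu
  rcases List.mem_map.1 hu' with ⟨i, _, rfl⟩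
  have := List.length_rotate w i
  rw [h] at this
  exact hw (List.eq_nil_of_length_eq_zero this.symm)

lemma mids_getLast? (w : List A) :
    ∀ x ∈ Multiset.sort ((mids e t a w 0 w : List (List A')) : Multiset (List A')) (· ≤ ·),
      x.getLast? = some (e a) := by
  intro x hx
  have hx' : x ∈ mids e t a w 0 w :=
    (Multiset.coe_eq_coe.1 (Multiset.sort_eq _ _) :
      (Multiset.sort _ (· ≤ ·)).Perm _).mem_iff.1 hx
  have hMform := mids_mem e t a w w [] (by simp)
  simp only [List.length_nil, List.nil_append] at hMform
  rcases hMform x hx' with ⟨s, rfl⟩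
  exact (List.getLast?_concat : ((t :: s) ++ [e a]).getLast? = _)

lemma mids_sort_length (w : List A) :
    (Multiset.sort ((mids e t a w 0 w : List (List A')) : Multiset (List A')) (· ≤ ·)).length
      = w.count a := by
  have h : (Multiset.sort ((mids e t a w 0 w : List (List A')) :
      Multiset (List A')) (· ≤ ·)).Perm (mids e t a w 0 w) :=
    Multiset.coe_eq_coe.1 (Multiset.sort_eq _ _)
  rw [h.length_eq, mids_length]

lemma bwt_al_top (he : StrictMono e) (ht : ∀ x : A, e x < t) (w : List A) (hw : w ≠ []) :
    bwt (al e t a w) = (bwt w).map (fun x => if x = a then t else e x)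
      ++ List.replicate (w.count a) (e a) := by
  unfold bwt
  rw [sort_rotations_top e t a he ht w hw, List.filterMap_append,
    filterMap_getLast?_map_al e t a _ (sort_mem_ne_nil w hw),
    filterMap_getLast?_const (e a) _ (mids_getLast? e t a w),
    mids_sort_length e t a w]

lemma bwt_al_bot (he : StrictMono e) (ht : ∀ x : A, t < e x) (w : List A) (hw : w ≠ []) :
    bwt (al e t a w) = List.replicate (w.count a) (e a)
      ++ (bwt w).map (fun x => if x = a then t else e x) := by
  unfold bwt
  rw [sort_rotations_bot e t a he ht w hw, List.filterMap_append,
    filterMap_getLast?_map_al e t a _ (sort_mem_ne_nil w hw),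
    filterMap_getLast?_const (e a) _ (mids_getLast? e t a w),
    mids_sort_length e t a w]

end BWT
end Core
end BWTAux

namespace BWTAux

section Inst
variable {A : Type*} [LinearOrder A] [Fintype A]


lemma univ_sort_withTop :
    (Finset.univ : Finset (WithTop A)).sort (· ≤ ·)
      = ((Finset.univ : Finset A).sort (· ≤ ·)).map (fun x : A => (x : WithTop A)) ++ [⊤] := by
  refine (fun hp hs => List.Perm.eq_of_pairwise' (Finset.pairwise_sort _ _) hs hp) ?_ ?_
  · refine List.perm_of_nodup_nodup_toFinset_eq (Finset.sort_nodup _ _) ?_ ?_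
    · rw [List.nodup_append]
      refine ⟨(Finset.sort_nodup _ _).map WithTop.coe_injective, List.nodup_singleton _, ?_⟩
      intro x hx y hx'
      rcases List.mem_map.1 hx with ⟨c, _, rfl⟩
      rw [List.mem_singleton] at hx'
      rw [hx']; exact WithTop.coe_ne_top
    · apply Finset.ext
      intro x
      simp only [List.mem_toFinset, Finset.mem_sort, Finset.mem_univ, true_iff]
      induction x using WithTop.recTopCoe with
      | top => simp
      | coe c => simp [Finset.mem_sort]
  · rw [List.pairwise_append]
    refine ⟨?_, List.pairwise_singleton _ _, ?_⟩
    · rw [List.pairwise_map]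
      exact (Finset.pairwise_sort _ _).imp (fun h => WithTop.coe_le_coe.2 h)
    · intro x _ y hy
      rw [List.mem_singleton] at hy
      subst hy
      exact le_top

lemma univ_sort_withBot :
    (Finset.univ : Finset (WithBot A)).sort (· ≤ ·)
      = ⊥ :: ((Finset.univ : Finset A).sort (· ≤ ·)).map (fun x : A => (x : WithBot A)) := by
  refine (fun hp hs => List.Perm.eq_of_pairwise' (Finset.pairwise_sort _ _) hs hp) ?_ ?_
  · refine List.perm_of_nodup_nodup_toFinset_eq (Finset.sort_nodup _ _) ?_ ?_
    · rw [List.nodup_cons]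
      refine ⟨?_, (Finset.sort_nodup _ _).map WithBot.coe_injective⟩
      intro hx
      rcases List.mem_map.1 hx with ⟨c, _, hc⟩
      exact WithBot.coe_ne_bot hc
    · apply Finset.ext
      intro x
      simp only [List.mem_toFinset, Finset.mem_sort, Finset.mem_univ, true_iff]
      induction x using WithBot.recBotCoe with
      | bot => simp
      | coe c => simp [Finset.mem_sort]
  · rw [List.pairwise_cons]
    refine ⟨fun x _ => bot_le, ?_⟩
    rw [List.pairwise_map]
    exact (Finset.pairwise_sort _ _).imp (fun h => WithBot.coe_le_coe.2 h)

/-- Lift a permutation of `A` to `WithTop A`. -/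
def liftPermTop (π : Equiv.Perm A) : Equiv.Perm (WithTop A) where
  toFun := WithTop.map π
  invFun := WithTop.map π.symm
  left_inv := by
    intro x
    induction x using WithTop.recTopCoe <;> simp
  right_inv := by
    intro x
    induction x using WithTop.recTopCoe <;> simp

/-- Lift a permutation of `A` to `WithBot A`. -/
def liftPermBot (π : Equiv.Perm A) : Equiv.Perm (WithBot A) where
  toFun := WithBot.map π
  invFun := WithBot.map π.symm
  left_inv := by
    intro x
    induction x using WithBot.recBotCoe <;> simp
  right_inv := by
    intro x
    induction x using WithBot.recBotCoe <;> simp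

end Inst
end BWTAux

namespace BWTAux
section Final
variable {A : Type*} [LinearOrder A] [Fintype A]

lemma clustering_top (w : List A) (hw : w ≠ []) (π : Equiv.Perm A)
    (hc : Clustering π w) (a : A) :
    Clustering ((liftPermTop π).trans (Equiv.swap (a : WithTop A) ⊤))
      (al (fun x : A => (x : WithTop A)) ⊤ a w) := by
  set e : A → WithTop A := fun x : A => (x : WithTop A) with he
  set π' := (liftPermTop π).trans (Equiv.swap (a : WithTop A) ⊤) with hπ'
  have hmono : StrictMono e := WithTop.coe_strictMono
  have hinj : Function.Injective e := WithTop.coe_injective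
  have hne : ∀ x : A, (⊤ : WithTop A) ≠ e x := fun x => Ne.symm (WithTop.coe_ne_top)
  have hlt : ∀ x : A, e x < ⊤ := fun x => WithTop.coe_lt_top x
  have hπtop : π' ⊤ = (a : WithTop A) := by
    simp only [hπ', Equiv.trans_apply]
    have h1 : (liftPermTop π) ⊤ = ⊤ := rfl
    rw [h1, Equiv.swap_apply_right]
  have hπcoe : ∀ c : A, π' (e c) = if π c = a then ⊤ else ((π c : A) : WithTop A) := by
    intro c
    simp only [hπ', Equiv.trans_apply]
    have h1 : (liftPermTop π) (e c) = ((π c : A) : WithTop A) := rfl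
    rw [h1]
    by_cases hpc : π c = a
    · rw [if_pos hpc, hpc, Equiv.swap_apply_left]
    · rw [if_neg hpc,
        Equiv.swap_apply_of_ne_of_ne (fun h => hpc (WithTop.coe_injective h)) WithTop.coe_ne_top]
  unfold Clustering at hc ⊢
  rw [bwt_al_top e ⊤ a hmono hlt w hw, hc, univ_sort_withTop, List.map_append,
    List.flatten_append, List.map_flatten, List.map_map, List.map_map]
  congr 1
  · congr 1
    apply List.map_congr_left
    intro c _
    simp only [Function.comp_apply]
    rw [List.map_replicate, hπcoe c]
    by_cases hpc : π c = a
    · rw [if_pos hpc, al_count_t e ⊤ a hne w, hpc]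
    · rw [if_neg hpc, al_count_e e ⊤ a hinj hne (π c) w]
  · simp only [List.map_cons, List.map_nil, List.flatten_cons, List.flatten_nil,
      List.append_nil, hπtop]
    rw [al_count_e e ⊤ a hinj hne a w]

lemma clustering_bot (w : List A) (hw : w ≠ []) (π : Equiv.Perm A)
    (hc : Clustering π w) (a : A) :
    Clustering ((liftPermBot π).trans (Equiv.swap (a : WithBot A) ⊥))
      (al (fun x : A => (x : WithBot A)) ⊥ a w) := by
  set e : A → WithBot A := fun x : A => (x : WithBot A) with he
  set π' := (liftPermBot π).trans (Equiv.swap (a : WithBot A) ⊥) with hπ'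
  have hmono : StrictMono e := WithBot.coe_strictMono
  have hinj : Function.Injective e := WithBot.coe_injective
  have hne : ∀ x : A, (⊥ : WithBot A) ≠ e x := fun x => Ne.symm (WithBot.coe_ne_bot)
  have hlt : ∀ x : A, (⊥ : WithBot A) < e x := fun x => WithBot.bot_lt_coe x
  have hπbot : π' ⊥ = (a : WithBot A) := by
    simp only [hπ', Equiv.trans_apply]
    have h1 : (liftPermBot π) ⊥ = ⊥ := rfl
    rw [h1, Equiv.swap_apply_right]
  have hπcoe : ∀ c : A, π' (e c) = if π c = a then ⊥ else ((π c : A) : WithBot A) := by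
    intro c
    simp only [hπ', Equiv.trans_apply]
    have h1 : (liftPermBot π) (e c) = ((π c : A) : WithBot A) := rfl
    rw [h1]
    by_cases hpc : π c = a
    · rw [if_pos hpc, hpc, Equiv.swap_apply_left]
    · rw [if_neg hpc,
        Equiv.swap_apply_of_ne_of_ne (fun h => hpc (WithBot.coe_injective h)) WithBot.coe_ne_bot]
  unfold Clustering at hc ⊢
  rw [bwt_al_bot e ⊥ a hmono hlt w hw, hc, univ_sort_withBot, List.map_cons,
    List.flatten_cons, List.map_flatten, List.map_map, List.map_map]
  congr 1
  · rw [hπbot, al_count_e e ⊥ a hinj hne a w]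
  · congr 1
    apply List.map_congr_left
    intro c _
    simp only [Function.comp_apply]
    rw [List.map_replicate, hπcoe c]
    by_cases hpc : π c = a
    · rw [if_pos hpc, al_count_t e ⊥ a hne w, hpc]
    · rw [if_neg hpc, al_count_e e ⊥ a hinj hne (π c) w]

end Final
end BWTAux


/-- If `w` is primitive and `π`-clustering over `A` and `b` is a new letter not in `A`, then
`α_{a,b}(w)` is clustering both over `A' = {a₁ < … < a_k < b}` (realized as `WithTop A`,
with `b = ⊤`) and over `A'' = {b < a₁ < … < a_k}` (realized as `WithBot A`, with `b = ⊥`). -/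
theorem clustering_alpha_new_letter {A : Type*} [LinearOrder A] [Fintype A] (w : List A)
    (hw : Primitive w) (π : Equiv.Perm A) (hc : Clustering π w) (a : A) :
    (∃ π' : Equiv.Perm (WithTop A),
      Clustering π'
        (w.flatMap fun c =>
          if c = a then [(a : WithTop A), (⊤ : WithTop A)] else [(c : WithTop A)])) ∧
    (∃ π'' : Equiv.Perm (WithBot A),
      Clustering π''
        (w.flatMap fun c =>
          if c = a then [(a : WithBot A), (⊥ : WithBot A)] else [(c : WithBot A)])) := by
  have hw0 : w ≠ [] := by
    intro h
    have := hw [] 0 (by rw [h]; rfl)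
    exact absurd this one_ne_zero.symm
  constructor
  · refine ⟨(BWTAux.liftPermTop π).trans (Equiv.swap (a : WithTop A) ⊤), ?_⟩
    have h1 : (w.flatMap fun c =>
        if c = a then [(a : WithTop A), (⊤ : WithTop A)] else [(c : WithTop A)])
        = BWTAux.al (fun x : A => (x : WithTop A)) ⊤ a w := rfl
    rw [h1]
    exact BWTAux.clustering_top w hw0 π hc a
  · refine ⟨(BWTAux.liftPermBot π).trans (Equiv.swap (a : WithBot A) ⊥), ?_⟩
    have h1 : (w.flatMap fun c =>
        if c = a then [(a : WithBot A), (⊥ : WithBot A)] else [(c : WithBot A)])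
        = BWTAux.al (fun x : A => (x : WithBot A)) ⊥ a w := rfl
    rw [h1]
    exact BWTAux.clustering_bot w hw0 π hc a
end
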